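/- arXiv:0902.2544 — 6 statements merged into one kernel-verified Lean document; each statement's English description precedes it below -/
import Mathlib

section
/- Let f be a C^1 function on (0,1) satisfying x·f'(x) = (1-x)·f'(1-x) for all x in (0,1). Fix θ in (0,1) and define φ(x) = θ·f(x) + (1-θ)·f(1-x). Then φ is twice differentiable at θ and φ''(θ) = -f'(θ)/(1-θ). -/
open Set

theorem phi_second_deriv (f f' : ℝ → ℝ)
    (hderiv : ∀ x ∈ Ioo (0:ℝ) 1, HasDerivAt f (f' x) x)
    (hcont : ContinuousOn f' (Ioo (0:ℝ) 1))
    (hfe : ∀ x ∈ Ioo (0:ℝ) 1, x * f' x = (1 - x) * f' (1 - x))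
    (θ : ℝ) (hθ : θ ∈ Ioo (0:ℝ) 1) :
    HasDerivAt (deriv (fun x => θ * f x + (1 - θ) * f (1 - x)))
      (-f' θ / (1 - θ)) θ := by
  obtain ⟨hθ0, hθ1⟩ := hθ
  have hnb : Ioo (0:ℝ) 1 ∈ nhds θ := Ioo_mem_nhds hθ0 hθ1
  set g : ℝ → ℝ := fun x => f' x * (θ - x) / (1 - x) with hg
  -- deriv φ = g on Ioo 0 1
  have hφ' : ∀ x ∈ Ioo (0:ℝ) 1,
      deriv (fun x => θ * f x + (1 - θ) * f (1 - x)) x = g x := by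
    intro x hx
    obtain ⟨hx0, hx1⟩ := hx
    have hx' : (1 - x) ∈ Ioo (0:ℝ) 1 := ⟨by linarith, by linarith⟩
    have h1 : HasDerivAt (fun y => f (1 - y)) (f' (1 - x) * (-1)) x := by
      have := (hderiv _ hx').comp x ((hasDerivAt_const x (1:ℝ)).sub (hasDerivAt_id x))
      simpa [Function.comp_def] using this
    have h2 : HasDerivAt (fun x => θ * f x + (1 - θ) * f (1 - x))
        (θ * f' x + (1 - θ) * (f' (1 - x) * (-1))) x :=
      ((hderiv x ⟨hx0, hx1⟩).const_mul θ).add (h1.const_mul (1 - θ))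
    rw [h2.deriv]
    have hfe' := hfe x ⟨hx0, hx1⟩
    have h1x : (1 : ℝ) - x ≠ 0 := by linarith
    have : f' (1 - x) = x * f' x / (1 - x) := by
      field_simp
      linarith [hfe']
    rw [this, hg]
    field_simp
    ring
  have heq : deriv (fun x => θ * f x + (1 - θ) * f (1 - x)) =ᶠ[nhds θ] g :=
    Filter.eventuallyEq_of_mem hnb hφ'
  -- g has derivative -f' θ / (1 - θ) at θ
  have hgθ : g θ = 0 := by simp [hg]
  have hgderiv : HasDerivAt g (-f' θ / (1 - θ)) θ := by
    rw [hasDerivAt_iff_tendsto_slope]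
    have hslope : ∀ x ∈ Ioo (0:ℝ) 1 \ {θ}, slope g θ x = -f' x / (1 - x) := by
      intro x ⟨⟨hx0, hx1⟩, hxθ⟩
      have hxθ' : x ≠ θ := hxθ
      have h1x : (1 : ℝ) - x ≠ 0 := by linarith
      have hsub : x - θ ≠ 0 := sub_ne_zero.mpr hxθ'
      rw [slope_def_field, hgθ, hg]
      field_simp
      ring
    have hmem : Ioo (0:ℝ) 1 \ {θ} ∈ nhdsWithin θ {θ}ᶜ := by
      rw [diff_eq, inter_comm]
      exact Filter.inter_mem (Filter.mem_inf_of_right (Filter.mem_principal_self _))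
        (Filter.mem_inf_of_left hnb)
    have hcontθ : ContinuousAt f' θ := hcont.continuousAt hnb
    have htend : Filter.Tendsto (fun x => -f' x / (1 - x)) (nhdsWithin θ {θ}ᶜ)
        (nhds (-f' θ / (1 - θ))) := by
      apply Filter.Tendsto.mono_left _ nhdsWithin_le_nhds
      exact (hcontθ.neg.div ((continuous_const.sub continuous_id).continuousAt)
        (by norm_num; linarith)).tendsto
    exact htend.congr' (Filter.eventuallyEq_of_mem hmem fun x hx => (hslope x hx).symm)
  exact hgderiv.congr_of_eventuallyEq heq
end

section
/- Let f be a C^1 function on (0,1) with f'(x) < 0 and x·f'(x) = (1-x)·f'(1-x) for all x in (0,1). Define d(x,y) = y·(f(x) - f(y)) + (1-y)·(f(1-x) - f(1-y)) for x, y in (0,1). Then for every fixed y in (0,1), the function x ↦ d(x,y) is strictly decreasing on (0,y) and strictly increasing on (y,1). -/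
open Set

theorem d_strict_mono (f f' : ℝ → ℝ)
    (hderiv : ∀ x ∈ Ioo (0:ℝ) 1, HasDerivAt f (f' x) x)
    (hcont : ContinuousOn f' (Ioo (0:ℝ) 1))
    (hneg : ∀ x ∈ Ioo (0:ℝ) 1, f' x < 0)
    (hfe : ∀ x ∈ Ioo (0:ℝ) 1, x * f' x = (1 - x) * f' (1 - x))
    (d : ℝ → ℝ → ℝ)
    (hd : ∀ x ∈ Ioo (0:ℝ) 1, ∀ y ∈ Ioo (0:ℝ) 1,
      d x y = y * (f x - f y) + (1 - y) * (f (1 - x) - f (1 - y)))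
    (y : ℝ) (hy : y ∈ Ioo (0:ℝ) 1) :
    StrictAntiOn (fun x => d x y) (Ioo (0:ℝ) y) ∧
    StrictMonoOn (fun x => d x y) (Ioo y (1:ℝ)) := by
  set h : ℝ → ℝ := fun x => y * f x + (1 - y) * f (1 - x) with hh_def
  have hh : ∀ x ∈ Ioo (0:ℝ) 1, HasDerivAt h (f' x * (y - x) / (1 - x)) x := by
    intro x hx
    have hx1 : (1:ℝ) - x ∈ Ioo (0:ℝ) 1 := ⟨by linarith [hx.2], by linarith [hx.1]⟩
    have h1 := (hderiv x hx).const_mul y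
    have h2 : HasDerivAt (fun x => f (1 - x)) (-f' (1 - x)) x := by
      have hlin : HasDerivAt (fun x : ℝ => 1 - x) (-1 : ℝ) x := by
        simpa using (hasDerivAt_id x).const_sub 1
      have := (hderiv _ hx1).comp x hlin
      rw [mul_neg_one] at this
      exact this
    have h3 := h2.const_mul (1 - y)
    have h4 := h1.add h3
    have heq : y * f' x + (1 - y) * -f' (1 - x) = f' x * (y - x) / (1 - x) := by
      have hfe' := hfe x hx
      have hxne : (1:ℝ) - x ≠ 0 := by have := hx.2; intro hc; linarith
      rw [eq_div_iff hxne]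
      linear_combination (1 - y) * hfe'
    rw [heq] at h4
    exact h4
  have hsub1 : Ioo (0:ℝ) y ⊆ Ioo (0:ℝ) 1 := Ioo_subset_Ioo le_rfl hy.2.le
  have hsub2 : Ioo y (1:ℝ) ⊆ Ioo (0:ℝ) 1 := Ioo_subset_Ioo hy.1.le le_rfl
  have hanti : StrictAntiOn h (Ioo (0:ℝ) y) := by
    apply strictAntiOn_of_hasDerivWithinAt_neg (f' := fun x => f' x * (y - x) / (1 - x))
      (convex_Ioo _ _)
    · intro x hx
      exact ((hh x (hsub1 hx)).continuousAt).continuousWithinAt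
    · intro x hx
      rw [interior_Ioo] at hx
      exact (hh x (hsub1 hx)).hasDerivWithinAt
    · intro x hx
      rw [interior_Ioo] at hx
      have hx' := hsub1 hx
      have h1 : f' x < 0 := hneg x hx'
      have h2 : 0 < y - x := by linarith [hx.2]
      have h3 : 0 < 1 - x := by linarith [hx'.2]
      exact div_neg_of_neg_of_pos (mul_neg_of_neg_of_pos h1 h2) h3
  have hmono : StrictMonoOn h (Ioo y (1:ℝ)) := by
    apply strictMonoOn_of_hasDerivWithinAt_pos (f' := fun x => f' x * (y - x) / (1 - x))
      (convex_Ioo _ _)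
    · intro x hx
      exact ((hh x (hsub2 hx)).continuousAt).continuousWithinAt
    · intro x hx
      rw [interior_Ioo] at hx
      exact (hh x (hsub2 hx)).hasDerivWithinAt
    · intro x hx
      rw [interior_Ioo] at hx
      have hx' := hsub2 hx
      have h1 : f' x < 0 := hneg x hx'
      have h2 : y - x < 0 := by linarith [hx.1]
      have h3 : 0 < 1 - x := by linarith [hx'.2]
      exact div_pos (mul_pos_of_neg_of_neg h1 h2) h3
  have hdh : ∀ x ∈ Ioo (0:ℝ) 1, d x y = h x - (y * f y + (1 - y) * f (1 - y)) := by
    intro x hx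
    rw [hd x hx y hy]; simp only [hh_def]; ring
  constructor
  · intro a ha b hb hab
    simp only
    rw [hdh a (hsub1 ha), hdh b (hsub1 hb)]
    have := hanti ha hb hab
    linarith
  · intro a ha b hb hab
    simp only
    rw [hdh a (hsub2 ha), hdh b (hsub2 hb)]
    have := hmono ha hb hab
    linarith
end

section
/- Let f be a C^1 function on (0,1) with f'(x) < 0 and x·f'(x) = (1-x)·f'(1-x) for all x in (0,1). Define d(x,y) = y·(f(x)-f(y)) + (1-y)·(f(1-x)-f(1-y)). Then d(x,y) ≥ 0 for all x,y in (0,1), with equality if and only if x = y. -/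
open Set

theorem d_nonneg_eq_iff (f f' : ℝ → ℝ)
    (hderiv : ∀ x ∈ Ioo (0:ℝ) 1, HasDerivAt f (f' x) x)
    (hcont : ContinuousOn f' (Ioo (0:ℝ) 1))
    (hneg : ∀ x ∈ Ioo (0:ℝ) 1, f' x < 0)
    (hfe : ∀ x ∈ Ioo (0:ℝ) 1, x * f' x = (1 - x) * f' (1 - x)) :
    ∀ x ∈ Ioo (0:ℝ) 1, ∀ y ∈ Ioo (0:ℝ) 1,
      0 ≤ y * (f x - f y) + (1 - y) * (f (1 - x) - f (1 - y)) ∧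
      (y * (f x - f y) + (1 - y) * (f (1 - x) - f (1 - y)) = 0 ↔ x = y) := by
  intro x hx y hy
  set g : ℝ → ℝ := fun z => y * f z + (1 - y) * f (1 - z) with hgdef
  have hd : y * (f x - f y) + (1 - y) * (f (1 - x) - f (1 - y)) = g x - g y := by
    simp [hgdef]; ring
  have key : ∀ z ∈ Ioo (0:ℝ) 1, HasDerivAt g (f' z * (y - z) / (1 - z)) z := by
    intro z hz
    have hz1 : (1 - z) ∈ Ioo (0:ℝ) 1 := ⟨by linarith [hz.2], by linarith [hz.1]⟩
    have hin : HasDerivAt (fun w : ℝ => 1 - w) (-1) z := by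
      exact (hasDerivAt_id' z).const_sub (1:ℝ)
    have h1 : HasDerivAt (fun w => f (1 - w)) (f' (1 - z) * (-1)) z :=
      (hderiv _ hz1).comp z hin
    have h2 : HasDerivAt g (y * f' z + (1 - y) * (f' (1 - z) * (-1))) z :=
      ((hderiv z hz).const_mul y).add (h1.const_mul (1 - y))
    convert h2 using 1
    have hfe' := hfe z hz
    have h1z : (1:ℝ) - z ≠ 0 := by have := hz.2; intro h; linarith
    rw [div_eq_iff h1z]
    linear_combination (y - 1) * hfe'
  have hcontg : ∀ s : Set ℝ, s ⊆ Ioo (0:ℝ) 1 → ContinuousOn g s := by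
    intro s hs
    exact fun z hz => ((key z (hs hz)).continuousAt).continuousWithinAt
  rcases lt_trichotomy x y with hlt | heq | hgt
  · -- x < y : g strictly decreasing on [x, y]
    have hsub : Icc x y ⊆ Ioo (0:ℝ) 1 := fun z hz =>
      ⟨lt_of_lt_of_le hx.1 hz.1, lt_of_le_of_lt hz.2 hy.2⟩
    have hanti : StrictAntiOn g (Icc x y) := by
      apply StrictAntiOn.mono (s := Icc x y) ?_ (subset_refl _)
      apply strictAntiOn_of_deriv_neg (convex_Icc x y) (hcontg _ hsub)
      intro z hz
      rw [interior_Icc] at hz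
      have hz' : z ∈ Ioo (0:ℝ) 1 := hsub (Ioo_subset_Icc_self hz)
      rw [(key z hz').deriv]
      have h1 : f' z < 0 := hneg z hz'
      have h2 : (0:ℝ) < 1 - z := by linarith [hz'.2]
      have h3 : 0 < y - z := by linarith [hz.2]
      exact div_neg_of_neg_of_pos (mul_neg_of_neg_of_pos h1 h3) h2
    have : g y < g x := hanti (left_mem_Icc.2 hlt.le) (right_mem_Icc.2 hlt.le) hlt
    constructor
    · rw [hd]; linarith
    · rw [hd]
      constructor
      · intro h; linarith
      · intro h; exact absurd h hlt.ne
  · subst heq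
    simp
  · -- y < x : g strictly increasing on [y, x]
    have hsub : Icc y x ⊆ Ioo (0:ℝ) 1 := fun z hz =>
      ⟨lt_of_lt_of_le hy.1 hz.1, lt_of_le_of_lt hz.2 hx.2⟩
    have hmono : StrictMonoOn g (Icc y x) := by
      apply strictMonoOn_of_deriv_pos (convex_Icc y x) (hcontg _ hsub)
      intro z hz
      rw [interior_Icc] at hz
      have hz' : z ∈ Ioo (0:ℝ) 1 := hsub (Ioo_subset_Icc_self hz)
      rw [(key z hz').deriv]
      have h1 : f' z < 0 := hneg z hz'
      have h2 : (0:ℝ) < 1 - z := by linarith [hz'.2]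
      have h3 : y - z < 0 := by linarith [hz.1]
      exact div_pos (mul_pos_of_neg_of_neg h1 h3) h2
    have : g y < g x := hmono (left_mem_Icc.2 hgt.le) (right_mem_Icc.2 hgt.le) hgt
    constructor
    · rw [hd]; linarith
    · rw [hd]
      constructor
      · intro h; linarith
      · intro h; exact absurd h.symm hgt.ne
end

section
/- Let X₁, X₂, ... be i.i.d. Bernoulli(θ₀) random variables with θ₀ ∈ (0,1), and let π be a Borel probability measure on (0,1) with π((θ₀-ε, θ₀+ε)) > 0 for all ε > 0. Let f(x) = -log x and let d(x,y) = y·log(y/x) + (1-y)·log((1-y)/(1-x)). With θ̄ₙ = (1/n)∑_{i=1}^n Xᵢ, define the posterior πₙ(A) = ∫_A exp(-n·d(t, θ̄ₙ)) dπ(t) / ∫_{(0,1)} exp(-n·d(t, θ̄ₙ)) dπ(t). Then for every ε > 0, πₙ((θ₀-ε, θ₀+ε)) → 1 almost surely as n → ∞. -/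
set_option maxHeartbeats 1000000

open MeasureTheory Set Filter

lemma kl_lower {t y : ℝ} (ht : t ∈ Ioo (0:ℝ) 1) (hy : y ∈ Ioo (0:ℝ) 1) :
    2 * (y - t)^2 ≤ y * Real.log (y / t) + (1 - y) * Real.log ((1 - y) / (1 - t)) := by
  obtain ⟨ht0, ht1⟩ := ht
  obtain ⟨hy0, hy1⟩ := hy
  set f : ℝ → ℝ := fun s => -(y * Real.log s) - (1 - y) * Real.log (1 - s) - 2 * (y - s)^2 with hf
  have hderiv : ∀ s ∈ Ioo (0:ℝ) 1, HasDerivAt f ((s - y) * (2*s - 1)^2 / (s * (1 - s))) s := by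
    intro s hs
    have hs1 : (0:ℝ) < 1 - s := by linarith [hs.2]
    have h1 : HasDerivAt (fun s : ℝ => Real.log s) s⁻¹ s := Real.hasDerivAt_log hs.1.ne'
    have h2 : HasDerivAt (fun s : ℝ => 1 - s) (-1) s := by
      exact (hasDerivAt_id' s).const_sub 1
    have h3 : HasDerivAt (fun s : ℝ => Real.log (1 - s)) ((1 - s)⁻¹ * (-1)) s :=
      (Real.hasDerivAt_log hs1.ne').comp s h2
    have h4 : HasDerivAt (fun s : ℝ => (y - s)^2) (2 * (y - s)^1 * (0 - 1)) s :=
      ((hasDerivAt_const s y).sub (hasDerivAt_id s)).pow 2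
    have h5 := ((h1.const_mul y).neg.sub (h3.const_mul (1 - y))).sub (h4.const_mul 2)
    refine h5.congr_deriv (Eq.symm ?_)
    have hsne : s ≠ 0 := hs.1.ne'
    have hs1ne : (1:ℝ) - s ≠ 0 := hs1.ne'
    rw [div_eq_iff (mul_pos hs.1 hs1).ne']
    field_simp
    ring
  have key : f y ≤ f t := by
    rcases le_or_gt y t with hyt | hyt
    · have hmono : MonotoneOn f (Icc y t) := by
        apply monotoneOn_of_deriv_nonneg (convex_Icc y t)
        · intro s hs
          exact (hderiv s ⟨lt_of_lt_of_le hy0 hs.1, lt_of_le_of_lt hs.2 ht1⟩).continuousAt.continuousWithinAt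
        · intro s hs
          rw [interior_Icc] at hs
          exact (hderiv s ⟨lt_trans hy0 hs.1, lt_trans hs.2 ht1⟩).differentiableAt.differentiableWithinAt
        · intro s hs
          rw [interior_Icc] at hs
          have hs' : s ∈ Ioo (0:ℝ) 1 := ⟨lt_trans hy0 hs.1, lt_trans hs.2 ht1⟩
          rw [(hderiv s hs').deriv]
          apply div_nonneg (mul_nonneg (by linarith [hs.1]) (sq_nonneg _))
          have := hs'.1; have := hs'.2; nlinarith
      exact hmono (left_mem_Icc.2 hyt) (right_mem_Icc.2 hyt) hyt
    · have hmono : AntitoneOn f (Icc t y) := by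
        apply antitoneOn_of_deriv_nonpos (convex_Icc t y)
        · intro s hs
          exact (hderiv s ⟨lt_of_lt_of_le ht0 hs.1, lt_of_le_of_lt hs.2 hy1⟩).continuousAt.continuousWithinAt
        · intro s hs
          rw [interior_Icc] at hs
          exact (hderiv s ⟨lt_trans ht0 hs.1, lt_trans hs.2 hy1⟩).differentiableAt.differentiableWithinAt
        · intro s hs
          rw [interior_Icc] at hs
          have hs' : s ∈ Ioo (0:ℝ) 1 := ⟨lt_trans ht0 hs.1, lt_trans hs.2 hy1⟩
          rw [(hderiv s hs').deriv]
          apply div_nonpos_of_nonpos_of_nonneg (mul_nonpos_of_nonpos_of_nonneg (by linarith [hs.2]) (sq_nonneg _))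
          have := hs'.1; have := hs'.2; nlinarith
      exact hmono (left_mem_Icc.2 hyt.le) (right_mem_Icc.2 hyt.le) hyt.le
  have e1 : Real.log (y / t) = Real.log y - Real.log t := Real.log_div hy0.ne' ht0.ne'
  have e2 : Real.log ((1 - y) / (1 - t)) = Real.log (1 - y) - Real.log (1 - t) :=
    Real.log_div (by linarith) (by linarith)
  have hfy : f y = -(y * Real.log y) - (1 - y) * Real.log (1 - y) := by
    simp [hf]
  rw [e1, e2]
  have := key
  rw [hfy] at this
  simp only [hf] at this
  nlinarith [this]

lemma kl_upper {t y : ℝ} (ht : t ∈ Ioo (0:ℝ) 1) (hy : y ∈ Ioo (0:ℝ) 1) :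
    y * Real.log (y / t) + (1 - y) * Real.log ((1 - y) / (1 - t))
      ≤ (y - t)^2 / (t * (1 - t)) := by
  obtain ⟨ht0, ht1⟩ := ht
  obtain ⟨hy0, hy1⟩ := hy
  have ht1' : (0:ℝ) < 1 - t := by linarith
  have h1 : Real.log (y / t) ≤ y / t - 1 :=
    Real.log_le_sub_one_of_pos (div_pos hy0 ht0)
  have h2 : Real.log ((1 - y) / (1 - t)) ≤ (1 - y) / (1 - t) - 1 :=
    Real.log_le_sub_one_of_pos (div_pos (by linarith) ht1')
  have hb : y * (y / t - 1) + (1 - y) * ((1 - y) / (1 - t) - 1)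
      = (y - t)^2 / (t * (1 - t)) := by
    field_simp
    ring
  nlinarith [mul_le_mul_of_nonneg_left h1 hy0.le,
    mul_le_mul_of_nonneg_left h2 (by linarith : (0:ℝ) ≤ 1 - y)]

lemma meas_g {d : ℝ → ℝ → ℝ}
    (hd : ∀ x y, d x y = y * Real.log (y / x) + (1 - y) * Real.log ((1 - y) / (1 - x)))
    (y c : ℝ) : Measurable fun t => Real.exp (c * d t y) := by
  have he : (fun t => Real.exp (c * d t y)) = fun t =>
      Real.exp (c * (y * Real.log (y / t) + (1 - y) * Real.log ((1 - y) / (1 - t)))) := by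
    funext t; rw [hd]
  rw [he]
  exact Real.measurable_exp.comp (measurable_const.mul
    ((measurable_const.mul (Real.measurable_log.comp (measurable_const.div measurable_id))).add
     (measurable_const.mul (Real.measurable_log.comp
        (measurable_const.div (measurable_const.sub measurable_id))))))

lemma post_tendsto (θ₀ : ℝ) (hθ₀ : θ₀ ∈ Ioo (0:ℝ) 1)
    (π : Measure ℝ) [IsProbabilityMeasure π] (hπsupp : π (Set.Ioo (0:ℝ) 1)ᶜ = 0)
    (hcharge : ∀ ε > 0, 0 < π (Set.Ioo (θ₀ - ε) (θ₀ + ε)))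
    (d : ℝ → ℝ → ℝ)
    (hd : ∀ x y, d x y = y * Real.log (y / x) + (1 - y) * Real.log ((1 - y) / (1 - x)))
    (ε : ℝ) (hε : 0 < ε) (m : ℕ → ℝ) (hm : Tendsto m atTop (nhds θ₀)) :
    Tendsto (fun n : ℕ => (∫ t in Set.Ioo (θ₀ - ε) (θ₀ + ε), Real.exp (-(n : ℝ) * d t (m n)) ∂π) /
      (∫ t in Set.Ioo (0:ℝ) 1, Real.exp (-(n : ℝ) * d t (m n)) ∂π)) atTop (nhds 1) := by
  obtain ⟨hθ0, hθ1⟩ := hθ₀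
  set I : Set ℝ := Ioo (0:ℝ) 1 with hI
  set A : Set ℝ := Ioo (θ₀ - ε) (θ₀ + ε) with hA
  set κ : ℝ := θ₀ * (1 - θ₀) / 4 with hκ
  have hκpos : 0 < κ := by rw [hκ]; nlinarith
  set η : ℝ := min (min (ε/4) (θ₀/2)) (min ((1-θ₀)/2) (min 1 (ε^2 * κ / 8))) with hη
  have hηpos : 0 < η := by
    apply lt_min (lt_min (by linarith) (by linarith))
    exact lt_min (by linarith) (lt_min one_pos (by positivity))
  have hη1 : η ≤ ε/4 := le_trans (min_le_left _ _) (min_le_left _ _)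
  have hη2 : η ≤ θ₀/2 := le_trans (min_le_left _ _) (min_le_right _ _)
  have hη3 : η ≤ (1-θ₀)/2 := le_trans (min_le_right _ _) (min_le_left _ _)
  have hη4 : η ≤ 1 := le_trans (min_le_right _ _) (le_trans (min_le_right _ _) (min_le_left _ _))
  have hη5 : η ≤ ε^2 * κ / 8 :=
    le_trans (min_le_right _ _) (le_trans (min_le_right _ _) (min_le_right _ _))
  set B : Set ℝ := Ioo (θ₀ - η) (θ₀ + η) with hB
  have hBpos : 0 < π B := hcharge η hηpos
  set pB : ℝ := (π B).toReal with hpB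
  have hpBpos : 0 < pB := ENNReal.toReal_pos hBpos.ne' (measure_ne_top _ _)
  have hBI : B ⊆ I := fun t ht => ⟨by linarith [ht.1], by linarith [ht.2]⟩
  set g : ℕ → ℝ → ℝ := fun n t => Real.exp (-(n : ℝ) * d t (m n)) with hg
  set N : ℕ → ℝ := fun n => ∫ t in I \ A, g n t ∂π with hN
  set D : ℕ → ℝ := fun n => ∫ t in I, g n t ∂π with hD
  have hgmeas : ∀ n, Measurable (g n) := fun n => meas_g hd (m n) _
  have hgpos : ∀ n t, 0 < g n t := fun n t => Real.exp_pos _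
  have hEv : ∀ᶠ n in atTop, |m n - θ₀| < η := by
    filter_upwards [hm.eventually (Metric.ball_mem_nhds θ₀ hηpos)] with n hn
    simpa [Real.dist_eq] using hn
  have hkey : ∀ᶠ n in atTop,
      (∫ t in A, g n t ∂π) / D n = 1 - N n / D n ∧
      0 ≤ N n / D n ∧ N n / D n ≤ Real.exp (-(n:ℝ) * (ε^2/2)) / pB := by
    filter_upwards [hEv] with n hn
    obtain ⟨hn1, hn2⟩ := abs_lt.1 hn
    set y : ℝ := m n with hy
    have hyI : y ∈ I := ⟨by linarith, by linarith⟩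
    have hd_nonneg : ∀ t ∈ I, 0 ≤ d t y := by
      intro t ht
      rw [hd]
      nlinarith [kl_lower ht hyI, sq_nonneg (y - t)]
    have hg_le_one : ∀ t ∈ I, g n t ≤ 1 := by
      intro t ht
      rw [hg]
      exact Real.exp_le_one_iff.2 (by nlinarith [hd_nonneg t ht, Nat.cast_nonneg (α := ℝ) n])
    have hint : IntegrableOn (g n) I π := by
      apply Integrable.mono' (integrable_const (1:ℝ)) ((hgmeas n).aestronglyMeasurable.restrict)
      rw [hI, ae_restrict_iff' measurableSet_Ioo]
      exact ae_of_all _ fun t ht => by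
        rw [Real.norm_eq_abs, abs_of_pos (hgpos n t)]; exact hg_le_one t ht
    have hintB : IntegrableOn (g n) B π := hint.mono_set hBI
    have hintIA : IntegrableOn (g n) (I \ A) π := hint.mono_set diff_subset
    have hintAI : IntegrableOn (g n) (A ∩ I) π := hint.mono_set inter_subset_right
    have hn0 : (0:ℝ) ≤ n := Nat.cast_nonneg n
    -- upper bound of d on B
    have hdB : ∀ t ∈ B, d t y ≤ ε^2/2 := by
      intro t ht
      have htI : t ∈ I := hBI ht
      have h1 : (y - t)^2 ≤ 4*η^2 := by nlinarith [ht.1, ht.2]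
      have h2 : κ ≤ t * (1 - t) := by
        have ht0 : θ₀/2 ≤ t := by linarith [ht.1]
        have ht1' : (1-θ₀)/2 ≤ 1 - t := by linarith [ht.2]
        calc κ = (θ₀/2) * ((1-θ₀)/2) := by rw [hκ]; ring
          _ ≤ t * (1-t) := mul_le_mul ht0 ht1' (by linarith) (by linarith)
      have hsq : η^2 ≤ η := by nlinarith
      calc d t y ≤ (y-t)^2/(t*(1-t)) := by rw [hd]; exact kl_upper htI hyI
        _ ≤ (4*η^2)/κ := div_le_div₀ (by positivity) h1 hκpos h2
        _ ≤ ε^2/2 := by rw [div_le_iff₀ hκpos]; nlinarith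
    -- lower bound of d off A
    have hdC : ∀ t ∈ I \ A, ε^2 ≤ d t y := by
      intro t ht
      have htI : t ∈ I := ht.1
      have htA := ht.2
      rw [hA, mem_Ioo, not_and_or, not_lt, not_lt] at htA
      have hlow : 2*(y-t)^2 ≤ d t y := by rw [hd]; exact kl_lower htI hyI
      rcases htA with h | h
      · have hyt : 3*ε/4 ≤ y - t := by linarith
        nlinarith
      · have hyt : 3*ε/4 ≤ t - y := by linarith
        nlinarith
    -- denominator lower bound
    have hDlow : Real.exp (-(n:ℝ)*(ε^2/2)) * pB ≤ D n := by
      have h1 : Real.exp (-(n:ℝ)*(ε^2/2)) * pB ≤ ∫ t in B, g n t ∂π := by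
        apply setIntegral_ge_of_const_le_real measurableSet_Ioo (measure_ne_top _ _) ?_ hintB
        intro t ht
        show Real.exp (-(n:ℝ)*(ε^2/2)) ≤ Real.exp (-(n:ℝ) * d t y)
        exact Real.exp_le_exp.2 (by nlinarith [hdB t ht])
      exact h1.trans (setIntegral_mono_set hint (ae_of_all _ fun t => (hgpos n t).le)
        (HasSubset.Subset.eventuallyLE hBI))
    have hDpos : 0 < D n := lt_of_lt_of_le (by positivity) hDlow
    -- numerator upper bound
    have hNle : N n ≤ Real.exp (-(n:ℝ)*ε^2) := by
      have h1 : N n ≤ ∫ _t in I \ A, Real.exp (-(n:ℝ)*ε^2) ∂π := by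
        apply setIntegral_mono_on hintIA (integrableOn_const (measure_ne_top _ _))
          (measurableSet_Ioo.diff measurableSet_Ioo)
        intro t ht
        show Real.exp (-(n:ℝ) * d t y) ≤ Real.exp (-(n:ℝ)*ε^2)
        exact Real.exp_le_exp.2 (by nlinarith [hdC t ht])
      rw [setIntegral_const, smul_eq_mul] at h1
      have h2 : (π (I \ A)).toReal ≤ 1 := by
        have := ENNReal.toReal_mono (by simp) (prob_le_one (μ := π) (s := I \ A))
        simpa using this
      rw [← measureReal_def] at h2
      nlinarith [Real.exp_pos (-(n:ℝ)*ε^2)]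
    have hNnonneg : 0 ≤ N n :=
      setIntegral_nonneg (measurableSet_Ioo.diff measurableSet_Ioo) fun t _ => (hgpos n t).le
    -- decomposition
    have hsplit : D n = (∫ t in A ∩ I, g n t ∂π) + N n := by
      have hunion : (A ∩ I) ∪ (I \ A) = I := by
        ext x; simp only [mem_union, mem_inter_iff, mem_diff]; tauto
      have hdisj : Disjoint (A ∩ I) (I \ A) :=
        Set.disjoint_left.2 fun x hx hx' => hx'.2 hx.1
      have h := setIntegral_union (f := g n) (μ := π) hdisj
        (measurableSet_Ioo.diff measurableSet_Ioo) hintAI hintIA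
      rw [hunion] at h
      exact h
    have hAeq : (∫ t in A, g n t ∂π) = ∫ t in A ∩ I, g n t ∂π := by
      apply setIntegral_congr_set
      rw [ae_eq_set]
      constructor
      · apply measure_mono_null ?_ hπsupp
        intro x hx
        exact fun hxI => hx.2 ⟨hx.1, hxI⟩
      · have : (A ∩ I) \ A = ∅ := by ext x; simp only [mem_diff, mem_inter_iff]; tauto
        rw [this]; exact measure_empty
    refine ⟨?_, div_nonneg hNnonneg hDpos.le, ?_⟩
    · rw [hAeq]
      have h3 : (∫ t in A ∩ I, g n t ∂π) = D n - N n := by linarith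
      rw [h3, sub_div, div_self hDpos.ne']
    · have hrb : N n / D n ≤ Real.exp (-(n:ℝ)*ε^2) / (Real.exp (-(n:ℝ)*(ε^2/2)) * pB) :=
        div_le_div₀ (Real.exp_pos _).le hNle (by positivity) hDlow
      have heq : Real.exp (-(n:ℝ)*ε^2) / (Real.exp (-(n:ℝ)*(ε^2/2)) * pB)
          = Real.exp (-(n:ℝ)*(ε^2/2)) / pB := by
        rw [div_mul_eq_div_div, ← Real.exp_sub]
        congr 2
        ring
      rwa [heq] at hrb
  -- conclude
  have hbtend : Tendsto (fun n : ℕ => Real.exp (-(n:ℝ)*(ε^2/2)) / pB) atTop (nhds 0) := by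
    have h1 : Tendsto (fun n : ℕ => (n:ℝ)*(ε^2/2)) atTop atTop :=
      Tendsto.atTop_mul_const (by positivity) tendsto_natCast_atTop_atTop
    have h2 : Tendsto (fun n : ℕ => -((n:ℝ)*(ε^2/2))) atTop atBot := tendsto_neg_atBot_iff.2 h1
    have h3 := Real.tendsto_exp_atBot.comp h2
    have h4 : Tendsto (fun n : ℕ => Real.exp (-(n:ℝ)*(ε^2/2))) atTop (nhds 0) := by
      simpa [neg_mul, Function.comp_def] using h3
    simpa using h4.div_const pB
  have hr : Tendsto (fun n => N n / D n) atTop (nhds 0) :=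
    squeeze_zero' (hkey.mono fun n h => h.2.1) (hkey.mono fun n h => h.2.2) hbtend
  have hfinal : Tendsto (fun n => 1 - N n / D n) atTop (nhds 1) := by
    simpa using (tendsto_const_nhds (x := (1:ℝ)) (f := atTop)).sub hr
  exact Tendsto.congr' (hkey.mono fun n h => h.1.symm) hfinal

lemma slln_bernoulli {Ω : Type*} [MeasurableSpace Ω] (P : Measure Ω) [IsProbabilityMeasure P]
    (θ₀ : ℝ) (hθ₀ : θ₀ ∈ Ioo (0:ℝ) 1)
    (X : ℕ → Ω → ℝ) (hmeas : ∀ i, Measurable (X i))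
    (hindep : ProbabilityTheory.iIndepFun X P)
    (hvals : ∀ i ω, X i ω = 0 ∨ X i ω = 1)
    (hlaw : ∀ i, P {ω | X i ω = 1} = ENNReal.ofReal θ₀) :
    ∀ᵐ ω ∂P, Tendsto (fun n : ℕ => (∑ i ∈ Finset.range n, X i ω) / n) atTop (nhds θ₀) := by
  classical
  have hset : ∀ i, MeasurableSet {ω | X i ω = 1} := fun i => hmeas i (measurableSet_singleton 1)
  have hpre : ∀ i (s : Set ℝ), P (X i ⁻¹' s) =
      (if (1:ℝ) ∈ s then ENNReal.ofReal θ₀ else 0) +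
        (if (0:ℝ) ∈ s then 1 - ENNReal.ofReal θ₀ else 0) := by
    intro i s
    by_cases h1 : (1:ℝ) ∈ s <;> by_cases h0 : (0:ℝ) ∈ s
    · have hu : X i ⁻¹' s = univ := eq_univ_of_forall fun ω => by
        rcases hvals i ω with h | h <;> simp [Set.mem_preimage, h, h0, h1]
      have hle : ENNReal.ofReal θ₀ ≤ 1 := ENNReal.ofReal_le_one.2 hθ₀.2.le
      rw [hu, measure_univ, if_pos h1, if_pos h0]
      exact (add_tsub_cancel_of_le hle).symm
    · have hu : X i ⁻¹' s = {ω | X i ω = 1} := by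
        ext ω; rcases hvals i ω with h | h <;> simp [Set.mem_preimage, h, h0, h1]
      rw [hu, hlaw i, if_pos h1, if_neg h0, add_zero]
    · have hu : X i ⁻¹' s = {ω | X i ω = 1}ᶜ := by
        ext ω; rcases hvals i ω with h | h <;> simp [Set.mem_preimage, h, h0, h1]
      rw [hu, measure_compl (hset i) (measure_ne_top _ _), hlaw i, if_neg h1, if_pos h0,
        measure_univ, zero_add]
    · have hu : X i ⁻¹' s = ∅ := by
        ext ω; rcases hvals i ω with h | h <;> simp [Set.mem_preimage, h, h0, h1]
      rw [hu, measure_empty, if_neg h1, if_neg h0, add_zero]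
  have hident : ∀ i, ProbabilityTheory.IdentDistrib (X i) (X 0) P P := by
    intro i
    refine ⟨(hmeas i).aemeasurable, (hmeas 0).aemeasurable, Measure.ext fun s hs => ?_⟩
    rw [Measure.map_apply (hmeas i) hs, Measure.map_apply (hmeas 0) hs, hpre i s, hpre 0 s]
  have hint : Integrable (X 0) P := by
    apply Integrable.mono' (integrable_const (1:ℝ)) (hmeas 0).aestronglyMeasurable
    exact ae_of_all _ fun ω => by rcases hvals 0 ω with h | h <;> simp [h]
  have hexp : ∫ ω, X 0 ω ∂P = θ₀ := by
    have hXind : X 0 = Set.indicator {ω | X 0 ω = 1} (fun _ => (1:ℝ)) := by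
      funext ω
      rcases hvals 0 ω with h | h
      · rw [h]; symm; apply Set.indicator_of_notMem; simp [h]
      · rw [h]; symm; exact Set.indicator_of_mem (show ω ∈ {ω | X 0 ω = 1} from h) _
    rw [hXind, integral_indicator_const _ (hset 0), measureReal_def, hlaw 0, smul_eq_mul, mul_one,
      ENNReal.toReal_ofReal hθ₀.1.le]
  have h := ProbabilityTheory.strong_law_ae_real X hint
    (fun i j hij => hindep.indepFun hij) hident
  have h2 : (∫ ω, X 0 ω ∂P) = θ₀ := hexp
  rw [h2] at h
  exact h

theorem bayes_consistency_bernoulli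
    {Ω : Type*} [MeasurableSpace Ω] (P : Measure Ω) [IsProbabilityMeasure P]
    (θ₀ : ℝ) (hθ₀ : θ₀ ∈ Ioo (0:ℝ) 1)
    (X : ℕ → Ω → ℝ) (hmeas : ∀ i, Measurable (X i))
    (hindep : ProbabilityTheory.iIndepFun X P)
    (hvals : ∀ i ω, X i ω = 0 ∨ X i ω = 1)
    (hlaw : ∀ i, P {ω | X i ω = 1} = ENNReal.ofReal θ₀)
    (π : Measure ℝ) [IsProbabilityMeasure π] (hπsupp : π (Set.Ioo (0:ℝ) 1)ᶜ = 0)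
    (hcharge : ∀ ε > 0, 0 < π (Set.Ioo (θ₀ - ε) (θ₀ + ε)))
    (d : ℝ → ℝ → ℝ)
    (hd : ∀ x y, d x y = y * Real.log (y / x) + (1 - y) * Real.log ((1 - y) / (1 - x)))
    (mean : ℕ → Ω → ℝ)
    (hmean : ∀ n ω, mean n ω = (∑ i ∈ Finset.range n, X i ω) / n)
    (post : ℕ → Ω → Set ℝ → ℝ)
    (hpost : ∀ n ω A, post n ω A =
      (∫ t in A, Real.exp (-(n : ℝ) * d t (mean n ω)) ∂π) /
      (∫ t in Set.Ioo (0:ℝ) 1, Real.exp (-(n : ℝ) * d t (mean n ω)) ∂π)) :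
    ∀ ε > 0, ∀ᵐ ω ∂P,
      Tendsto (fun n => post n ω (Set.Ioo (θ₀ - ε) (θ₀ + ε))) atTop (nhds 1) := by
  intro ε hε
  filter_upwards [slln_bernoulli P θ₀ hθ₀ X hmeas hindep hvals hlaw] with ω hω
  have hmw : Tendsto (fun n => mean n ω) atTop (nhds θ₀) :=
    Tendsto.congr (fun n => (hmean n ω).symm) hω
  have h := post_tendsto θ₀ hθ₀ π hπsupp hcharge d hd ε hε (fun n => mean n ω) hmw
  exact Tendsto.congr (fun n => (hpost n ω (Set.Ioo (θ₀ - ε) (θ₀ + ε))).symm) h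
end

section
/- Let p : (0,1) → [0,∞) be continuous and integrable, let θ₀ ∈ (0,1) with p(θ₀) > 0, and let d(t,θ₀) = θ₀·log(θ₀/t) + (1-θ₀)·log((1-θ₀)/(1-t)). Then as n → ∞, ∫_{(0,1)} p(t)·e^{-n·d(t,θ₀)} dt ∼ √(2π)·p(θ₀) / √(n·d''(θ₀)), where d''(θ₀) = 1/(θ₀(1-θ₀)) is the second derivative of t ↦ d(t,θ₀) at θ₀. -/
open Set Filter MeasureTheory Real

/-- If `f a = 0`, `f' a = 0` and the second derivative is positive on an open
interval containing `a`, then `f ≥ 0` there, strictly away from `a`. -/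
lemma aux_conv_pos {f f' f'' : ℝ → ℝ} {x y a : ℝ} (ha : a ∈ Ioo x y)
    (hf : ∀ t ∈ Ioo x y, HasDerivAt f (f' t) t)
    (hf' : ∀ t ∈ Ioo x y, HasDerivAt f' (f'' t) t)
    (hpos : ∀ t ∈ Ioo x y, 0 < f'' t)
    (hfa : f a = 0) (hf'a : f' a = 0) :
    ∀ t ∈ Ioo x y, 0 ≤ f t ∧ (t ≠ a → 0 < f t) := by
  have hmono : StrictMonoOn f' (Ioo x y) := by
    refine strictMonoOn_of_deriv_pos (convex_Ioo x y)
      (fun t ht => (hf' t ht).continuousAt.continuousWithinAt) (fun t ht => ?_)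
    rw [interior_Ioo] at ht
    rw [(hf' t ht).deriv]
    exact hpos t ht
  intro t ht
  rcases lt_trichotomy t a with h | h | h
  · have hsub : Icc t a ⊆ Ioo x y := fun s hs => ⟨lt_of_lt_of_le ht.1 hs.1, lt_of_le_of_lt hs.2 ha.2⟩
    obtain ⟨ξ, hξ, hslope⟩ := exists_hasDerivAt_eq_slope f f' h
      (fun s hs => (hf s (hsub hs)).continuousAt.continuousWithinAt)
      (fun s hs => hf s (hsub (Ioo_subset_Icc_self hs)))
    have hξmem : ξ ∈ Ioo x y := hsub (Ioo_subset_Icc_self hξ)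
    have : f' ξ < 0 := hf'a ▸ hmono hξmem ha hξ.2
    rw [hslope, hfa] at this
    have hlt : (0 - f t) / (a - t) < 0 := this
    have hft : 0 < f t := by
      rcases lt_or_ge 0 (f t) with h' | h'
      · exact h'
      · exfalso
        have : 0 ≤ (0 - f t) / (a - t) := div_nonneg (by linarith) (by linarith)
        linarith
    exact ⟨hft.le, fun _ => hft⟩
  · subst h; exact ⟨hfa.ge, fun h => absurd rfl h⟩
  · have hsub : Icc a t ⊆ Ioo x y := fun s hs => ⟨lt_of_lt_of_le ha.1 hs.1, lt_of_le_of_lt hs.2 ht.2⟩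
    obtain ⟨ξ, hξ, hslope⟩ := exists_hasDerivAt_eq_slope f f' h
      (fun s hs => (hf s (hsub hs)).continuousAt.continuousWithinAt)
      (fun s hs => hf s (hsub (Ioo_subset_Icc_self hs)))
    have hξmem : ξ ∈ Ioo x y := hsub (Ioo_subset_Icc_self hξ)
    have : 0 < f' ξ := hf'a ▸ hmono ha hξmem hξ.1
    rw [hslope, hfa] at this
    have hft : 0 < f t := by
      rcases lt_or_ge 0 (f t) with h' | h'
      · exact h'
      · exfalso
        have : (f t - 0) / (t - a) ≤ 0 := div_nonpos_of_nonpos_of_nonneg (by linarith) (by linarith)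
        linarith
    exact ⟨hft.le, fun _ => hft⟩
open Set Filter MeasureTheory Real

lemma gauss_shift_int {b : ℝ} (hb : 0 < b) (θ : ℝ) :
    Integrable (fun t : ℝ => Real.exp (-b * (t - θ)^2)) := by
  exact (integrable_exp_neg_mul_sq hb).comp_sub_right θ

lemma gauss_shift_eq {b : ℝ} (hb : 0 < b) (θ : ℝ) :
    (∫ t : ℝ, Real.exp (-b * (t - θ)^2)) = Real.sqrt (π / b) := by
  rw [integral_sub_right_eq_self (fun x => Real.exp (-b * x^2)) θ]
  exact integral_gaussian b

lemma gauss_trunc_lower {b δ : ℝ} (hb : 0 < b) (hδ : 0 < δ) (θ : ℝ) :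
    Real.sqrt (π / b) - Real.exp (-(b * δ^2 / 2)) * Real.sqrt (π / (b / 2)) ≤
      ∫ t in Ioo (θ - δ) (θ + δ), Real.exp (-b * (t - θ)^2) := by
  have hint := gauss_shift_int hb θ
  have hmeas : MeasurableSet (Ioo (θ - δ) (θ + δ)) := measurableSet_Ioo
  have hsplit := MeasureTheory.integral_add_compl hmeas hint
  -- bound the complement integral
  have hint2 : Integrable (fun t : ℝ => Real.exp (-(b * δ^2 / 2)) * Real.exp (-(b/2) * (t - θ)^2)) :=
    (gauss_shift_int (by linarith) θ).const_mul _
  have hcompl : (∫ t in (Ioo (θ - δ) (θ + δ))ᶜ, Real.exp (-b * (t - θ)^2)) ≤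
      Real.exp (-(b * δ^2 / 2)) * Real.sqrt (π / (b / 2)) := by
    have h1 : (∫ t in (Ioo (θ - δ) (θ + δ))ᶜ, Real.exp (-b * (t - θ)^2)) ≤
        ∫ t in (Ioo (θ - δ) (θ + δ))ᶜ, Real.exp (-(b * δ^2 / 2)) * Real.exp (-(b/2) * (t - θ)^2) := by
      refine setIntegral_mono_on hint.integrableOn hint2.integrableOn hmeas.compl (fun t ht => ?_)
      rw [← Real.exp_add]
      apply Real.exp_le_exp.2
      have hd2 : δ^2 ≤ (t - θ)^2 := by
        simp only [mem_compl_iff, mem_Ioo, not_and_or, not_lt] at ht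
        rcases ht with h | h
        · have : δ ≤ θ - t := by linarith
          calc δ^2 ≤ (θ - t)^2 := by nlinarith
          _ = (t - θ)^2 := by ring
        · nlinarith
      nlinarith
    calc _ ≤ _ := h1
    _ ≤ ∫ t : ℝ, Real.exp (-(b * δ^2 / 2)) * Real.exp (-(b/2) * (t - θ)^2) :=
        setIntegral_le_integral hint2 (Filter.Eventually.of_forall (fun t => by positivity))
    _ = Real.exp (-(b * δ^2 / 2)) * Real.sqrt (π / (b / 2)) := by
        rw [MeasureTheory.integral_const_mul, gauss_shift_eq (by linarith) θ]
  have := gauss_shift_eq hb θ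
  linarith [hsplit, hcompl, this]

lemma gauss_trunc_upper {b δ : ℝ} (hb : 0 < b) (θ : ℝ) :
    (∫ t in Ioo (θ - δ) (θ + δ), Real.exp (-b * (t - θ)^2)) ≤ Real.sqrt (π / b) := by
  rw [← gauss_shift_eq hb θ]
  exact setIntegral_le_integral (gauss_shift_int hb θ)
    (Filter.Eventually.of_forall (fun t => by positivity))
set_option maxHeartbeats 1600000 in
theorem laplace_normalization
    (p : ℝ → ℝ) (hp_nonneg : ∀ t ∈ Ioo (0:ℝ) 1, 0 ≤ p t)
    (hp_cont : ContinuousOn p (Ioo (0:ℝ) 1))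
    (hp_int : IntegrableOn p (Ioo (0:ℝ) 1))
    (θ₀ : ℝ) (hθ₀ : θ₀ ∈ Ioo (0:ℝ) 1) (hpθ₀ : 0 < p θ₀)
    (d : ℝ → ℝ)
    (hd : ∀ t, d t = θ₀ * Real.log (θ₀ / t) + (1 - θ₀) * Real.log ((1 - θ₀) / (1 - t))) :
    Tendsto (fun n : ℕ =>
      (∫ t in Ioo (0:ℝ) 1, p t * Real.exp (-(n : ℝ) * d t)) /
        (Real.sqrt (2 * Real.pi) * p θ₀ /
          Real.sqrt ((n : ℝ) * (1 / (θ₀ * (1 - θ₀))))))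
      atTop (nhds 1) := by
  obtain ⟨hθ0, hθ1⟩ := hθ₀
  set c : ℝ := 1 / (θ₀ * (1 - θ₀)) with hc_def
  have hθprod : 0 < θ₀ * (1 - θ₀) := mul_pos hθ0 (by linarith)
  have hc : 0 < c := by rw [hc_def]; positivity
  have hdeq : d = fun t => θ₀ * Real.log (θ₀ / t) + (1 - θ₀) * Real.log ((1 - θ₀) / (1 - t)) :=
    funext hd
  set d' : ℝ → ℝ := fun t => -(θ₀ / t) + (1 - θ₀) / (1 - t) with hd'_def
  set d'' : ℝ → ℝ := fun t => θ₀ / t^2 + (1 - θ₀) / (1 - t)^2 with hd''_def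
  have hder : ∀ t ∈ Ioo (0:ℝ) 1, HasDerivAt d (d' t) t := by
    intro t ht
    obtain ⟨ht0, ht1⟩ := ht
    have h1t : (0:ℝ) < 1 - t := by linarith
    rw [hdeq]
    have h1 : HasDerivAt (fun t : ℝ => θ₀ / t) (-(θ₀ / t^2)) t := by
      simpa [div_eq_mul_inv, mul_comm] using (hasDerivAt_inv ht0.ne').const_mul θ₀
    have h2 : HasDerivAt (fun t : ℝ => (1 - θ₀) / (1 - t)) ((1 - θ₀) / (1 - t)^2) t := by
      have hbase : HasDerivAt (fun t : ℝ => 1 - t) (-1) t := by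
        simpa using (hasDerivAt_id t).const_sub 1
      have := (hbase.inv h1t.ne').const_mul (1 - θ₀)
      exact this.congr_deriv (by ring)
    have h1θ : (0:ℝ) < 1 - θ₀ := by linarith
    have hl1 := (h1.log (div_pos hθ0 ht0).ne').const_mul θ₀
    have hl2 := (h2.log (div_pos h1θ h1t).ne').const_mul (1 - θ₀)
    refine (hl1.add hl2).congr_deriv ?_
    rw [hd'_def]
    field_simp
  have hder2 : ∀ t ∈ Ioo (0:ℝ) 1, HasDerivAt d' (d'' t) t := by
    intro t ht
    obtain ⟨ht0, ht1⟩ := ht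
    have h1t : (0:ℝ) < 1 - t := by linarith
    have h1 : HasDerivAt (fun t : ℝ => -(θ₀ / t)) (θ₀ / t^2) t := by
      have : HasDerivAt (fun t : ℝ => θ₀ / t) (-(θ₀ / t^2)) t := by
        simpa [div_eq_mul_inv, mul_comm] using (hasDerivAt_inv ht0.ne').const_mul θ₀
      exact this.neg.congr_deriv (neg_neg _)
    have h2 : HasDerivAt (fun t : ℝ => (1 - θ₀) / (1 - t)) ((1 - θ₀) / (1 - t)^2) t := by
      have hbase : HasDerivAt (fun t : ℝ => 1 - t) (-1) t := by
        simpa using (hasDerivAt_id t).const_sub 1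
      have := (hbase.inv h1t.ne').const_mul (1 - θ₀)
      exact this.congr_deriv (by ring)
    rw [hd'_def, hd''_def]
    exact h1.add h2
  have hd0 : d θ₀ = 0 := by
    rw [hd, div_self hθ0.ne', div_self (by linarith : (1:ℝ) - θ₀ ≠ 0), Real.log_one]
    ring
  have h1θ₀ : (0:ℝ) < 1 - θ₀ := by linarith
  have hd'0 : d' θ₀ = 0 := by
    rw [hd'_def]
    simp only [div_self hθ0.ne', div_self h1θ₀.ne']
    ring
  have hd''θ : d'' θ₀ = c := by
    rw [hd''_def, hc_def]
    field_simp [hθ0.ne', h1θ₀.ne']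
    ring
  -- nonnegativity and strict positivity of d
  have hdpos := aux_conv_pos (f := d) (f' := d') (f'' := d'') ⟨hθ0, hθ1⟩ hder hder2
    (fun t ht => by
      rw [hd''_def]
      have h1t : (0:ℝ) < 1 - t := by linarith [ht.2]
      have := ht.1
      positivity)
    hd0 hd'0
  have hd_nonneg : ∀ t ∈ Ioo (0:ℝ) 1, 0 ≤ d t := fun t ht => (hdpos t ht).1
  have hd_cont : ContinuousOn d (Ioo (0:ℝ) 1) :=
    fun t ht => (hder t ht).continuousAt.continuousWithinAt
  have hmeasIoo : MeasurableSet (Ioo (0:ℝ) 1) := measurableSet_Ioo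
  have hint : ∀ n : ℕ, IntegrableOn (fun t => p t * Real.exp (-(n:ℝ) * d t)) (Ioo (0:ℝ) 1) := by
    intro n
    refine hp_int.mono' ?_ ?_
    · exact (hp_cont.mul (Real.continuous_exp.comp_continuousOn
        (continuousOn_const.mul hd_cont))).aestronglyMeasurable hmeasIoo
    · refine (ae_restrict_iff' hmeasIoo).2 (ae_of_all _ (fun t ht => ?_))
      have h1 : 0 ≤ p t := hp_nonneg t ht
      have h2 : Real.exp (-(n:ℝ) * d t) ≤ 1 := by
        rw [← Real.exp_zero]
        apply Real.exp_le_exp.2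
        have := hd_nonneg t ht
        have hn : (0:ℝ) ≤ (n:ℝ) := Nat.cast_nonneg n
        nlinarith
      rw [Real.norm_eq_abs, abs_of_nonneg (mul_nonneg h1 (Real.exp_pos _).le)]
      exact mul_le_of_le_one_right h1 h2
  set C : ℝ := ∫ t in Ioo (0:ℝ) 1, p t with hC_def
  have hanti : StrictAntiOn d (Ioo (0:ℝ) θ₀) := by
    have hsub : Ioo (0:ℝ) θ₀ ⊆ Ioo (0:ℝ) 1 := Ioo_subset_Ioo_right hθ1.le
    refine strictAntiOn_of_deriv_neg (convex_Ioo 0 θ₀) (hd_cont.mono hsub) (fun t ht => ?_)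
    rw [interior_Ioo] at ht
    rw [(hder t (hsub ht)).deriv]
    show -(θ₀ / t) + (1 - θ₀) / (1 - t) < 0
    have ht0 := ht.1
    have h1t : (0:ℝ) < 1 - t := by linarith [ht.2]
    have : (1 - θ₀) / (1 - t) < θ₀ / t := by
      rw [div_lt_div_iff₀ h1t ht0]
      nlinarith [ht.2]
    linarith
  have hmono : StrictMonoOn d (Ioo θ₀ 1) := by
    have hsub : Ioo θ₀ 1 ⊆ Ioo (0:ℝ) 1 := Ioo_subset_Ioo_left hθ0.le
    refine strictMonoOn_of_deriv_pos (convex_Ioo θ₀ 1) (hd_cont.mono hsub) (fun t ht => ?_)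
    rw [interior_Ioo] at ht
    rw [(hder t (hsub ht)).deriv]
    show 0 < -(θ₀ / t) + (1 - θ₀) / (1 - t)
    have ht0 : (0:ℝ) < t := lt_trans hθ0 ht.1
    have h1t : (0:ℝ) < 1 - t := by linarith [ht.2]
    have : θ₀ / t < (1 - θ₀) / (1 - t) := by
      rw [div_lt_div_iff₀ ht0 h1t]
      nlinarith [ht.1]
    linarith
  rw [Metric.tendsto_nhds]
  intro ε hε
  -- choose η
  obtain ⟨η, hη0, hη1, hup, hlo⟩ : ∃ η : ℝ, 0 < η ∧ η < 1 ∧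
      (1+η)/Real.sqrt (1-η) < 1+ε ∧ 1-ε < (1-η)/Real.sqrt (1+η) := by
    have hcont1 : ContinuousAt (fun η : ℝ => (1+η)/Real.sqrt (1-η)) 0 := by
      apply ContinuousAt.div
      · fun_prop
      · exact Real.continuous_sqrt.continuousAt.comp (by fun_prop)
      · norm_num
    have hcont2 : ContinuousAt (fun η : ℝ => (1-η)/Real.sqrt (1+η)) 0 := by
      apply ContinuousAt.div
      · fun_prop
      · exact Real.continuous_sqrt.continuousAt.comp (by fun_prop)
      · norm_num
    have hv1 : (fun η : ℝ => (1+η)/Real.sqrt (1-η)) 0 = 1 := by norm_num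
    have hv2 : (fun η : ℝ => (1-η)/Real.sqrt (1+η)) 0 = 1 := by norm_num
    have h1 : Tendsto (fun η : ℝ => (1+η)/Real.sqrt (1-η)) (nhdsWithin 0 (Ioi 0)) (nhds 1) := by
      have := (hcont1.continuousWithinAt (s := Ioi 0)).tendsto
      norm_num at this
      exact this
    have h2 : Tendsto (fun η : ℝ => (1-η)/Real.sqrt (1+η)) (nhdsWithin 0 (Ioi 0)) (nhds 1) := by
      have := (hcont2.continuousWithinAt (s := Ioi 0)).tendsto
      norm_num at this
      exact this
    have e1 := h1.eventually_lt_const (by linarith : (1:ℝ) < 1 + ε)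
    have e2 := h2.eventually_const_lt (by linarith : 1 - ε < (1:ℝ))
    have e3 : ∀ᶠ η : ℝ in nhdsWithin 0 (Ioi 0), η < 1 :=
      eventually_nhdsWithin_of_eventually_nhds (isOpen_Iio.eventually_mem (by norm_num))
    have e4 : ∀ᶠ η : ℝ in nhdsWithin 0 (Ioi 0), 0 < η := eventually_mem_nhdsWithin
    obtain ⟨η, ha, hb, hc', hd'⟩ := (e1.and (e2.and (e3.and e4))).exists
    exact ⟨η, hd', hc', ha, hb⟩
  have h1η : (0:ℝ) < 1 - η := by linarith
  have h1η' : (0:ℝ) < 1 + η := by linarith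
  -- choose δ
  have hp_at : ContinuousAt p θ₀ := hp_cont.continuousAt (isOpen_Ioo.mem_nhds ⟨hθ0, hθ1⟩)
  have hd''_at : ContinuousAt d'' θ₀ := by
    rw [hd''_def]
    apply ContinuousAt.add
    · exact continuousAt_const.div (by fun_prop) (pow_ne_zero 2 hθ0.ne')
    · exact continuousAt_const.div (by fun_prop) (pow_ne_zero 2 h1θ₀.ne')
  have hE : ∀ᶠ t in nhds θ₀, t ∈ Ioo (0:ℝ) 1 ∧ |p t - p θ₀| < η * p θ₀ ∧
      c*(1-η) < d'' t ∧ d'' t < c*(1+η) := by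
    have e1 : ∀ᶠ t in nhds θ₀, t ∈ Ioo (0:ℝ) 1 := isOpen_Ioo.eventually_mem ⟨hθ0, hθ1⟩
    have e2 : ∀ᶠ t in nhds θ₀, |p t - p θ₀| < η * p θ₀ := by
      have := Metric.tendsto_nhds.mp hp_at (η * p θ₀) (by positivity)
      simpa [Real.dist_eq] using this
    have e3 : ∀ᶠ t in nhds θ₀, c*(1-η) < d'' t := by
      refine hd''_at.eventually_const_lt ?_
      rw [hd''θ]; nlinarith
    have e4 : ∀ᶠ t in nhds θ₀, d'' t < c*(1+η) := by
      refine hd''_at.eventually_lt_const ?_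
      rw [hd''θ]; nlinarith
    filter_upwards [e1, e2, e3, e4] with t a b cc dd
    exact ⟨a, b, cc, dd⟩
  obtain ⟨δ₀, hδ₀, hball⟩ := Metric.eventually_nhds_iff_ball.mp hE
  set δ : ℝ := δ₀ / 2 with hδ_def
  have hδ : 0 < δ := by positivity
  have hballIoo : Metric.ball θ₀ δ₀ = Ioo (θ₀ - δ₀) (θ₀ + δ₀) := Real.ball_eq_Ioo θ₀ δ₀
  have hIoosub : ∀ t ∈ Ioo (θ₀-δ₀) (θ₀+δ₀), t ∈ Ioo (0:ℝ) 1 ∧ |p t - p θ₀| < η * p θ₀ ∧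
      c*(1-η) < d'' t ∧ d'' t < c*(1+η) := by
    intro t ht
    exact hball t (by rw [hballIoo]; exact ht)
  have hsmall : ∀ t ∈ Ioo (θ₀-δ) (θ₀+δ), t ∈ Ioo (θ₀-δ₀) (θ₀+δ₀) := by
    intro t ht
    constructor <;> [linarith [ht.1]; linarith [ht.2]]
  have hθmem : θ₀ ∈ Ioo (θ₀-δ₀) (θ₀+δ₀) := ⟨by linarith, by linarith⟩
  have hIoo01 : ∀ t ∈ Ioo (θ₀-δ₀) (θ₀+δ₀), t ∈ Ioo (0:ℝ) 1 := fun t ht => (hIoosub t ht).1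
  have hquadder : ∀ (a t : ℝ), HasDerivAt (fun t : ℝ => a/2*(t-θ₀)^2) (a*(t-θ₀)) t := by
    intro a t
    have h : HasDerivAt (fun t : ℝ => (t-θ₀)^2) (2*(t-θ₀)) t := by
      exact (((hasDerivAt_id t).sub_const θ₀).pow 2).congr_deriv (by simp only [id]; norm_num)
    have := h.const_mul (a/2)
    exact this.congr_deriv (by ring)
  have hlinder : ∀ (a t : ℝ), HasDerivAt (fun t : ℝ => a*(t-θ₀)) a t := by
    intro a t
    simpa using ((hasDerivAt_id t).sub_const θ₀).const_mul a
  have hquad_up : ∀ t ∈ Ioo (θ₀-δ₀) (θ₀+δ₀), d t ≤ c*(1+η)/2*(t-θ₀)^2 := by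
    have H := aux_conv_pos (f := fun t => c*(1+η)/2*(t-θ₀)^2 - d t)
      (f' := fun t => c*(1+η)*(t-θ₀) - d' t) (f'' := fun t => c*(1+η) - d'' t) hθmem
      (fun t ht => (hquadder (c*(1+η)) t).sub (hder t (hIoo01 t ht)))
      (fun t ht => (hlinder (c*(1+η)) t).sub (hder2 t (hIoo01 t ht)))
      (fun t ht => sub_pos.2 (hIoosub t ht).2.2.2)
      (by simp [hd0]) (by simp [hd'0])
    intro t ht
    linarith [(H t ht).1]
  have hquad_lo : ∀ t ∈ Ioo (θ₀-δ₀) (θ₀+δ₀), c*(1-η)/2*(t-θ₀)^2 ≤ d t := by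
    have H := aux_conv_pos (f := fun t => d t - c*(1-η)/2*(t-θ₀)^2)
      (f' := fun t => d' t - c*(1-η)*(t-θ₀)) (f'' := fun t => d'' t - c*(1-η)) hθmem
      (fun t ht => (hder t (hIoo01 t ht)).sub (hquadder (c*(1-η)) t))
      (fun t ht => (hder2 t (hIoo01 t ht)).sub (hlinder (c*(1-η)) t))
      (fun t ht => sub_pos.2 (hIoosub t ht).2.2.1)
      (by simp [hd0]) (by simp [hd'0])
    intro t ht
    linarith [(H t ht).1]
  have hmemL : (θ₀ - δ) ∈ Ioo (θ₀-δ₀) (θ₀+δ₀) := ⟨by linarith [hδ_def], by linarith [hδ_def]⟩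
  have hmemR : (θ₀ + δ) ∈ Ioo (θ₀-δ₀) (θ₀+δ₀) := ⟨by linarith [hδ_def], by linarith [hδ_def]⟩
  have hdL : 0 < d (θ₀-δ) := (hdpos _ (hIoo01 _ hmemL)).2 (by linarith)
  have hdR : 0 < d (θ₀+δ) := (hdpos _ (hIoo01 _ hmemR)).2 (by linarith)
  set m : ℝ := min (d (θ₀-δ)) (d (θ₀+δ)) with hm_def
  have hm : 0 < m := lt_min hdL hdR
  have htail : ∀ t ∈ Ioo (0:ℝ) 1 \ Ioo (θ₀-δ) (θ₀+δ), m ≤ d t := by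
    rintro t ⟨ht, hnot⟩
    simp only [mem_Ioo, not_and_or, not_lt] at hnot
    rcases hnot with h | h
    · rcases eq_or_lt_of_le h with he | hlt
      · rw [he]
        exact min_le_left _ _
      · have h1 : t ∈ Ioo (0:ℝ) θ₀ := ⟨ht.1, by linarith⟩
        have h2 : θ₀-δ ∈ Ioo (0:ℝ) θ₀ := ⟨(hIoo01 _ hmemL).1, by linarith⟩
        exact le_trans (min_le_left _ _) (hanti h1 h2 hlt).le
    · rcases eq_or_lt_of_le h with he | hlt
      · rw [← he]
        exact min_le_right _ _
      · have h1 : t ∈ Ioo θ₀ 1 := ⟨by linarith, ht.2⟩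
        have h2 : θ₀+δ ∈ Ioo θ₀ 1 := ⟨by linarith, (hIoo01 _ hmemR).2⟩
        exact le_trans (min_le_right _ _) (hmono h2 h1 hlt).le
  have hAsub : Ioo (θ₀-δ) (θ₀+δ) ⊆ Ioo (0:ℝ) 1 := fun t ht => hIoo01 t (hsmall t ht)
  have hmeasA : MeasurableSet (Ioo (θ₀-δ) (θ₀+δ)) := measurableSet_Ioo
  have hpbound : ∀ t ∈ Ioo (θ₀-δ) (θ₀+δ), (1-η)*p θ₀ ≤ p t ∧ p t ≤ (1+η)*p θ₀ := by
    intro t ht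
    have h := abs_lt.mp (hIoosub t (hsmall t ht)).2.1
    have e1 : (1-η)*p θ₀ = p θ₀ - η * p θ₀ := by ring
    have e2 : (1+η)*p θ₀ = p θ₀ + η * p θ₀ := by ring
    exact ⟨by linarith [h.1], by linarith [h.2]⟩
  have hC0 : 0 ≤ C := by
    rw [hC_def]
    exact setIntegral_nonneg hmeasIoo hp_nonneg
  have key_up : ∀ n : ℕ, 1 ≤ n →
      (∫ t in Ioo (0:ℝ) 1, p t * Real.exp (-(n:ℝ) * d t)) ≤
      (1+η)*p θ₀*Real.sqrt (π/((n:ℝ)*c*(1-η)/2)) + Real.exp (-(n:ℝ)*m) * C := by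
    intro n hn
    have hn0 : (0:ℝ) < n := by exact_mod_cast hn
    set b : ℝ := (n:ℝ)*c*(1-η)/2 with hb_def
    have hb : 0 < b := by
      rw [hb_def]
      exact div_pos (mul_pos (mul_pos hn0 hc) h1η) two_pos
    have hsplit := integral_inter_add_diff (μ := volume)
      (f := fun t => p t * Real.exp (-(n:ℝ) * d t)) (s := Ioo (0:ℝ) 1) hmeasA (hint n)
    rw [Set.inter_eq_self_of_subset_right hAsub] at hsplit
    have hinner : (∫ t in Ioo (θ₀-δ) (θ₀+δ), p t * Real.exp (-(n:ℝ) * d t)) ≤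
        (1+η)*p θ₀*Real.sqrt (π/b) := by
      have h1 : (∫ t in Ioo (θ₀-δ) (θ₀+δ), p t * Real.exp (-(n:ℝ) * d t)) ≤
          ∫ t in Ioo (θ₀-δ) (θ₀+δ), (1+η)*p θ₀ * Real.exp (-b*(t-θ₀)^2) := by
        refine setIntegral_mono_on ((hint n).mono_set hAsub)
          (((gauss_shift_int hb θ₀).const_mul ((1+η)*p θ₀)).integrableOn) hmeasA (fun t ht => ?_)
        have hql := hquad_lo t (hsmall t ht)
        have hexp : Real.exp (-(n:ℝ) * d t) ≤ Real.exp (-b*(t-θ₀)^2) := by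
          apply Real.exp_le_exp.2
          have h2 := mul_le_mul_of_nonneg_left hql hn0.le
          have h3 : (n:ℝ)*(c*(1-η)/2*(t-θ₀)^2) = b*(t-θ₀)^2 := by rw [hb_def]; ring
          linarith
        exact mul_le_mul (hpbound t ht).2 hexp (Real.exp_pos _).le
          (mul_nonneg (by linarith) hpθ₀.le)
      calc (∫ t in Ioo (θ₀-δ) (θ₀+δ), p t * Real.exp (-(n:ℝ) * d t)) ≤
          ∫ t in Ioo (θ₀-δ) (θ₀+δ), (1+η)*p θ₀ * Real.exp (-b*(t-θ₀)^2) := h1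
        _ = (1+η)*p θ₀ * ∫ t in Ioo (θ₀-δ) (θ₀+δ), Real.exp (-b*(t-θ₀)^2) :=
            integral_const_mul _ _
        _ ≤ (1+η)*p θ₀*Real.sqrt (π/b) :=
            mul_le_mul_of_nonneg_left (gauss_trunc_upper hb θ₀)
              (mul_nonneg (by linarith) hpθ₀.le)
    have houter : (∫ t in Ioo (0:ℝ) 1 \ Ioo (θ₀-δ) (θ₀+δ), p t * Real.exp (-(n:ℝ) * d t)) ≤
        Real.exp (-(n:ℝ)*m) * C := by
      have hdm : MeasurableSet (Ioo (0:ℝ) 1 \ Ioo (θ₀-δ) (θ₀+δ)) := hmeasIoo.diff hmeasA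
      have h1 : (∫ t in Ioo (0:ℝ) 1 \ Ioo (θ₀-δ) (θ₀+δ), p t * Real.exp (-(n:ℝ) * d t)) ≤
          ∫ t in Ioo (0:ℝ) 1 \ Ioo (θ₀-δ) (θ₀+δ), Real.exp (-(n:ℝ)*m) * p t := by
        refine setIntegral_mono_on ((hint n).mono_set diff_subset)
          (((hp_int.mono_set diff_subset)).const_mul _) hdm (fun t ht => ?_)
        have hp0 := hp_nonneg t ht.1
        have hexp : Real.exp (-(n:ℝ)*d t) ≤ Real.exp (-(n:ℝ)*m) := by
          apply Real.exp_le_exp.2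
          have h2 := mul_le_mul_of_nonneg_left (htail t ht) hn0.le
          linarith
        exact le_trans (mul_le_mul_of_nonneg_left hexp hp0) (le_of_eq (mul_comm _ _))
      have h3 : (∫ t in Ioo (0:ℝ) 1 \ Ioo (θ₀-δ) (θ₀+δ), p t) ≤ C := by
        rw [hC_def]
        refine setIntegral_mono_set hp_int ?_ (HasSubset.Subset.eventuallyLE diff_subset)
        exact (ae_restrict_iff' hmeasIoo).2 (ae_of_all _ hp_nonneg)
      calc (∫ t in Ioo (0:ℝ) 1 \ Ioo (θ₀-δ) (θ₀+δ), p t * Real.exp (-(n:ℝ) * d t)) ≤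
          ∫ t in Ioo (0:ℝ) 1 \ Ioo (θ₀-δ) (θ₀+δ), Real.exp (-(n:ℝ)*m) * p t := h1
        _ = Real.exp (-(n:ℝ)*m) * ∫ t in Ioo (0:ℝ) 1 \ Ioo (θ₀-δ) (θ₀+δ), p t :=
            integral_const_mul _ _
        _ ≤ Real.exp (-(n:ℝ)*m) * C :=
            mul_le_mul_of_nonneg_left h3 (Real.exp_pos _).le
    linarith [hsplit, hinner, houter]
  have key_lo : ∀ n : ℕ, 1 ≤ n →
      (1-η)*p θ₀*(Real.sqrt (π/((n:ℝ)*c*(1+η)/2)) -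
        Real.exp (-((n:ℝ)*c*(1+η)/2*δ^2/2)) * Real.sqrt (π/((n:ℝ)*c*(1+η)/2/2))) ≤
      (∫ t in Ioo (0:ℝ) 1, p t * Real.exp (-(n:ℝ) * d t)) := by
    intro n hn
    have hn0 : (0:ℝ) < n := by exact_mod_cast hn
    set b : ℝ := (n:ℝ)*c*(1+η)/2 with hb_def
    have hb : 0 < b := by
      rw [hb_def]
      exact div_pos (mul_pos (mul_pos hn0 hc) h1η') two_pos
    have hsplit := integral_inter_add_diff (μ := volume)
      (f := fun t => p t * Real.exp (-(n:ℝ) * d t)) (s := Ioo (0:ℝ) 1) hmeasA (hint n)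
    rw [Set.inter_eq_self_of_subset_right hAsub] at hsplit
    have houter : 0 ≤ ∫ t in Ioo (0:ℝ) 1 \ Ioo (θ₀-δ) (θ₀+δ), p t * Real.exp (-(n:ℝ) * d t) :=
      setIntegral_nonneg (hmeasIoo.diff hmeasA)
        (fun t ht => mul_nonneg (hp_nonneg t ht.1) (Real.exp_pos _).le)
    have hinner : (1-η)*p θ₀*(Real.sqrt (π/b) - Real.exp (-(b*δ^2/2)) * Real.sqrt (π/(b/2))) ≤
        ∫ t in Ioo (θ₀-δ) (θ₀+δ), p t * Real.exp (-(n:ℝ) * d t) := by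
      have h1 : (∫ t in Ioo (θ₀-δ) (θ₀+δ), (1-η)*p θ₀ * Real.exp (-b*(t-θ₀)^2)) ≤
          ∫ t in Ioo (θ₀-δ) (θ₀+δ), p t * Real.exp (-(n:ℝ) * d t) := by
        refine setIntegral_mono_on
          (((gauss_shift_int hb θ₀).const_mul ((1-η)*p θ₀)).integrableOn)
          ((hint n).mono_set hAsub) hmeasA (fun t ht => ?_)
        have hqu := hquad_up t (hsmall t ht)
        have hexp : Real.exp (-b*(t-θ₀)^2) ≤ Real.exp (-(n:ℝ) * d t) := by
          apply Real.exp_le_exp.2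
          have h2 := mul_le_mul_of_nonneg_left hqu hn0.le
          have h3 : (n:ℝ)*(c*(1+η)/2*(t-θ₀)^2) = b*(t-θ₀)^2 := by rw [hb_def]; ring
          linarith
        exact mul_le_mul (hpbound t ht).1 hexp (Real.exp_pos _).le (hp_nonneg t (hAsub ht))
      calc (1-η)*p θ₀*(Real.sqrt (π/b) - Real.exp (-(b*δ^2/2)) * Real.sqrt (π/(b/2))) ≤
          (1-η)*p θ₀ * ∫ t in Ioo (θ₀-δ) (θ₀+δ), Real.exp (-b*(t-θ₀)^2) :=
            mul_le_mul_of_nonneg_left (gauss_trunc_lower hb hδ θ₀)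
              (mul_nonneg (by linarith) hpθ₀.le)
        _ = ∫ t in Ioo (θ₀-δ) (θ₀+δ), (1-η)*p θ₀ * Real.exp (-b*(t-θ₀)^2) :=
            (integral_const_mul _ _).symm
        _ ≤ ∫ t in Ioo (θ₀-δ) (θ₀+δ), p t * Real.exp (-(n:ℝ) * d t) := h1
    linarith [hsplit, hinner, houter]
  have sqrt2π : 0 < Real.sqrt (2*π) := Real.sqrt_pos.2 (by positivity)
  have hsq : ∀ a : ℝ, 0 < a → ∀ n : ℕ, 1 ≤ n →
      Real.sqrt (π/((n:ℝ)*c*a/2)) = Real.sqrt (2*π)/(Real.sqrt a * Real.sqrt ((n:ℝ)*c)) := by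
    intro a ha n hn
    have hn0 : (0:ℝ) < n := by exact_mod_cast hn
    rw [show π/((n:ℝ)*c*a/2) = 2*π/(a*((n:ℝ)*c)) by
      field_simp]
    rw [Real.sqrt_div (by positivity) _, Real.sqrt_mul ha.le]
  have hsq2 : ∀ a : ℝ, 0 < a → ∀ n : ℕ, 1 ≤ n →
      Real.sqrt (π/((n:ℝ)*c*a/2/2)) =
        Real.sqrt 2 * Real.sqrt (2*π)/(Real.sqrt a * Real.sqrt ((n:ℝ)*c)) := by
    intro a ha n hn
    have hn0 : (0:ℝ) < n := by exact_mod_cast hn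
    rw [show π/((n:ℝ)*c*a/2/2) = 2*(2*π)/(a*((n:ℝ)*c)) by
      field_simp]
    rw [Real.sqrt_div (by positivity) _, Real.sqrt_mul (by norm_num : (0:ℝ) ≤ 2),
      Real.sqrt_mul ha.le]
  have texp : ∀ K : ℝ, 0 < K → Tendsto (fun n : ℕ => Real.exp (-((n:ℝ)*K))) atTop (nhds 0) := by
    intro K hK
    have h1 : Tendsto (fun n : ℕ => (n:ℝ)*K) atTop atTop :=
      tendsto_natCast_atTop_atTop.atTop_mul_const hK
    exact Real.tendsto_exp_atBot.comp (tendsto_neg_atTop_atBot.comp h1)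
  have hΦ : Tendsto (fun n : ℕ => C * Real.sqrt ((n:ℝ)*c) * Real.exp (-((n:ℝ)*m)))
      atTop (nhds 0) := by
    have hbound : ∀ n : ℕ, C * Real.sqrt ((n:ℝ)*c) * Real.exp (-((n:ℝ)*m)) ≤
        C*Real.exp (-((n:ℝ)*m)) + (C*c/m)*(((n:ℝ)*m)*Real.exp (-((n:ℝ)*m))) := by
      intro n
      have hx : (0:ℝ) ≤ (n:ℝ)*c := by positivity
      have hs : Real.sqrt ((n:ℝ)*c) ≤ 1 + (n:ℝ)*c := by
        rw [show (1+(n:ℝ)*c) = Real.sqrt ((1+(n:ℝ)*c)^2) from (Real.sqrt_sq (by positivity)).symm]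
        exact Real.sqrt_le_sqrt (by nlinarith)
      have he : (0:ℝ) < Real.exp (-((n:ℝ)*m)) := Real.exp_pos _
      have h2 := mul_le_mul_of_nonneg_right (mul_le_mul_of_nonneg_left hs hC0) he.le
      calc C * Real.sqrt ((n:ℝ)*c) * Real.exp (-((n:ℝ)*m)) ≤
          C*(1+(n:ℝ)*c)*Real.exp (-((n:ℝ)*m)) := h2
        _ = C*Real.exp (-((n:ℝ)*m)) + (C*c/m)*(((n:ℝ)*m)*Real.exp (-((n:ℝ)*m))) := by
            field_simp
    have hlow : ∀ n : ℕ, 0 ≤ C * Real.sqrt ((n:ℝ)*c) * Real.exp (-((n:ℝ)*m)) := by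
      intro n
      have := Real.sqrt_nonneg ((n:ℝ)*c)
      positivity
    have t1 : Tendsto (fun n : ℕ => C*Real.exp (-((n:ℝ)*m))) atTop (nhds 0) := by
      simpa using (texp m hm).const_mul C
    have t2 : Tendsto (fun n : ℕ => ((n:ℝ)*m)*Real.exp (-((n:ℝ)*m))) atTop (nhds 0) := by
      have hcomp : Tendsto (fun n : ℕ => (n:ℝ)*m) atTop atTop :=
        tendsto_natCast_atTop_atTop.atTop_mul_const hm
      have := (tendsto_pow_mul_exp_neg_atTop_nhds_zero 1).comp hcomp
      simpa [pow_one, Function.comp_def] using this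
    have t3 : Tendsto (fun n : ℕ =>
        C*Real.exp (-((n:ℝ)*m)) + (C*c/m)*(((n:ℝ)*m)*Real.exp (-((n:ℝ)*m))))
        atTop (nhds 0) := by
      simpa using t1.add (t2.const_mul (C*c/m))
    exact squeeze_zero hlow hbound t3
  have hUb : ∀ᶠ n : ℕ in atTop,
      (∫ t in Ioo (0:ℝ) 1, p t * Real.exp (-(n:ℝ)*d t)) * Real.sqrt ((n:ℝ)*c) <
        (1+ε)*(Real.sqrt (2*π)*p θ₀) := by
    have hlim : Tendsto (fun n : ℕ => (1+η)*p θ₀*Real.sqrt (2*π)/Real.sqrt (1-η) +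
        C * Real.sqrt ((n:ℝ)*c) * Real.exp (-((n:ℝ)*m))) atTop
        (nhds ((1+η)*p θ₀*Real.sqrt (2*π)/Real.sqrt (1-η))) := by
      simpa using tendsto_const_nhds.add hΦ
    have hslt : (1+η)*p θ₀*Real.sqrt (2*π)/Real.sqrt (1-η) <
        (1+ε)*(Real.sqrt (2*π)*p θ₀) := by
      have h2 := mul_lt_mul_of_pos_right hup (mul_pos sqrt2π hpθ₀)
      calc (1+η)*p θ₀*Real.sqrt (2*π)/Real.sqrt (1-η)
          = (1+η)/Real.sqrt (1-η)*(Real.sqrt (2*π)*p θ₀) := by ring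
        _ < (1+ε)*(Real.sqrt (2*π)*p θ₀) := h2
    filter_upwards [hlim.eventually_lt_const hslt, eventually_ge_atTop 1] with n h1 hn
    have hn0 : (0:ℝ) < n := by exact_mod_cast hn
    have hR : 0 < Real.sqrt ((n:ℝ)*c) := Real.sqrt_pos.2 (by positivity)
    have hsη : 0 < Real.sqrt (1-η) := Real.sqrt_pos.2 h1η
    have hmul := mul_le_mul_of_nonneg_right (key_up n hn) hR.le
    have heq : ((1+η)*p θ₀*Real.sqrt (π/((n:ℝ)*c*(1-η)/2)) + Real.exp (-(n:ℝ)*m) * C) *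
          Real.sqrt ((n:ℝ)*c)
        = (1+η)*p θ₀*Real.sqrt (2*π)/Real.sqrt (1-η) +
          C * Real.sqrt ((n:ℝ)*c) * Real.exp (-((n:ℝ)*m)) := by
      rw [hsq (1-η) h1η n hn]
      field_simp
    calc (∫ t in Ioo (0:ℝ) 1, p t * Real.exp (-(n:ℝ)*d t)) * Real.sqrt ((n:ℝ)*c) ≤
        ((1+η)*p θ₀*Real.sqrt (π/((n:ℝ)*c*(1-η)/2)) + Real.exp (-(n:ℝ)*m) * C) *
          Real.sqrt ((n:ℝ)*c) := hmul
      _ = (1+η)*p θ₀*Real.sqrt (2*π)/Real.sqrt (1-η) +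
          C * Real.sqrt ((n:ℝ)*c) * Real.exp (-((n:ℝ)*m)) := heq
      _ < (1+ε)*(Real.sqrt (2*π)*p θ₀) := h1
  have hLb : ∀ᶠ n : ℕ in atTop,
      (1-ε)*(Real.sqrt (2*π)*p θ₀) <
        (∫ t in Ioo (0:ℝ) 1, p t * Real.exp (-(n:ℝ)*d t)) * Real.sqrt ((n:ℝ)*c) := by
    set K : ℝ := c*(1+η)/2*δ^2/2 with hK_def
    have hK : 0 < K := by
      rw [hK_def]
      exact div_pos (mul_pos (div_pos (mul_pos hc h1η') two_pos) (pow_pos hδ 2)) two_pos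
    have hlim : Tendsto (fun n : ℕ => (1-η)*p θ₀*(Real.sqrt (2*π)/Real.sqrt (1+η)) -
        ((1-η)*p θ₀*(Real.sqrt 2 * Real.sqrt (2*π)/Real.sqrt (1+η))) * Real.exp (-((n:ℝ)*K)))
        atTop (nhds ((1-η)*p θ₀*(Real.sqrt (2*π)/Real.sqrt (1+η)))) := by
      have h0 := (tendsto_const_nhds (α := ℕ) (f := atTop)
          (x := (1-η)*p θ₀*(Real.sqrt (2*π)/Real.sqrt (1+η)))).sub
        ((texp K hK).const_mul ((1-η)*p θ₀*(Real.sqrt 2 * Real.sqrt (2*π)/Real.sqrt (1+η))))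
      simpa using h0
    have hslt : (1-ε)*(Real.sqrt (2*π)*p θ₀) <
        (1-η)*p θ₀*(Real.sqrt (2*π)/Real.sqrt (1+η)) := by
      have h2 := mul_lt_mul_of_pos_right hlo (mul_pos sqrt2π hpθ₀)
      calc (1-ε)*(Real.sqrt (2*π)*p θ₀) <
          (1-η)/Real.sqrt (1+η)*(Real.sqrt (2*π)*p θ₀) := h2
        _ = (1-η)*p θ₀*(Real.sqrt (2*π)/Real.sqrt (1+η)) := by ring
    filter_upwards [hlim.eventually_const_lt hslt, eventually_ge_atTop 1] with n h1 hn
    have hn0 : (0:ℝ) < n := by exact_mod_cast hn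
    have hR : 0 < Real.sqrt ((n:ℝ)*c) := Real.sqrt_pos.2 (by positivity)
    have hsη : 0 < Real.sqrt (1+η) := Real.sqrt_pos.2 h1η'
    have hmul := mul_le_mul_of_nonneg_right (key_lo n hn) hR.le
    have heq : ((1-η)*p θ₀*(Real.sqrt (π/((n:ℝ)*c*(1+η)/2)) -
          Real.exp (-((n:ℝ)*c*(1+η)/2*δ^2/2)) * Real.sqrt (π/((n:ℝ)*c*(1+η)/2/2)))) *
            Real.sqrt ((n:ℝ)*c)
        = (1-η)*p θ₀*(Real.sqrt (2*π)/Real.sqrt (1+η)) -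
          ((1-η)*p θ₀*(Real.sqrt 2 * Real.sqrt (2*π)/Real.sqrt (1+η))) *
            Real.exp (-((n:ℝ)*K)) := by
      rw [hsq (1+η) h1η' n hn, hsq2 (1+η) h1η' n hn]
      rw [show (n:ℝ)*c*(1+η)/2*δ^2/2 = (n:ℝ)*K by rw [hK_def]; ring]
      field_simp
    calc (1-ε)*(Real.sqrt (2*π)*p θ₀) <
        (1-η)*p θ₀*(Real.sqrt (2*π)/Real.sqrt (1+η)) -
          ((1-η)*p θ₀*(Real.sqrt 2 * Real.sqrt (2*π)/Real.sqrt (1+η))) *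
            Real.exp (-((n:ℝ)*K)) := h1
      _ = ((1-η)*p θ₀*(Real.sqrt (π/((n:ℝ)*c*(1+η)/2)) -
          Real.exp (-((n:ℝ)*c*(1+η)/2*δ^2/2)) * Real.sqrt (π/((n:ℝ)*c*(1+η)/2/2)))) *
            Real.sqrt ((n:ℝ)*c) := heq.symm
      _ ≤ (∫ t in Ioo (0:ℝ) 1, p t * Real.exp (-(n:ℝ)*d t)) * Real.sqrt ((n:ℝ)*c) := hmul
  filter_upwards [hUb, hLb, eventually_ge_atTop 1] with n hu hl hn
  have hn0 : (0:ℝ) < n := by exact_mod_cast hn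
  have hR : 0 < Real.sqrt ((n:ℝ)*c) := Real.sqrt_pos.2 (by positivity)
  have hDn : 0 < Real.sqrt (2*π)*p θ₀/Real.sqrt ((n:ℝ)*c) := div_pos (mul_pos sqrt2π hpθ₀) hR
  rw [Real.dist_eq, abs_lt]
  have hJu : (∫ t in Ioo (0:ℝ) 1, p t * Real.exp (-(n:ℝ)*d t)) /
      (Real.sqrt (2*π)*p θ₀/Real.sqrt ((n:ℝ)*c)) < 1+ε := by
    rw [div_lt_iff₀ hDn]
    rw [show (1+ε)*(Real.sqrt (2*π)*p θ₀/Real.sqrt ((n:ℝ)*c)) =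
      (1+ε)*(Real.sqrt (2*π)*p θ₀)/Real.sqrt ((n:ℝ)*c) by ring]
    rw [lt_div_iff₀ hR]
    exact hu
  have hJl : 1-ε < (∫ t in Ioo (0:ℝ) 1, p t * Real.exp (-(n:ℝ)*d t)) /
      (Real.sqrt (2*π)*p θ₀/Real.sqrt ((n:ℝ)*c)) := by
    rw [lt_div_iff₀ hDn]
    rw [show (1-ε)*(Real.sqrt (2*π)*p θ₀/Real.sqrt ((n:ℝ)*c)) =
      (1-ε)*(Real.sqrt (2*π)*p θ₀)/Real.sqrt ((n:ℝ)*c) by ring]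
    rw [div_lt_iff₀ hR]
    exact hl
  constructor <;> linarith
end

section
/- Let p : (0,1) → [0,∞) be continuous and integrable, θ₀ ∈ (0,1), b ∈ (θ₀, 1), p(b) > 0, and let d(t,θ₀) be the Bernoulli KL divergence (as a function of t, strictly increasing on (θ₀,1)). Then as n → ∞, ∫_{(b,1)} p(s)·e^{-n·d(s,θ₀)} ds ∼ (1/n)·(p(b)/d'(b))·e^{-n·d(b,θ₀)}, where d'(b) = ∂d(t,θ₀)/∂t at t = b. -/
open Set Filter MeasureTheory

lemma lb_exp_integral (α a a' : ℝ) (hα : 0 < α) (h : a ≤ a') :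
    ∫ s in Ioo a a', Real.exp (-(α * (s - a))) =
      (1 - Real.exp (-(α * (a' - a)))) / α := by
  rw [← integral_Ioc_eq_integral_Ioo, ← intervalIntegral.integral_of_le h]
  have key : ∀ x ∈ uIcc a a',
      HasDerivAt (fun s => -(Real.exp (-(α * (s - a))) / α))
        (Real.exp (-(α * (x - a)))) x := by
    intro x _
    have h1 : HasDerivAt (fun s : ℝ => -(α * (s - a))) (-α) x := by
      simpa using (((hasDerivAt_id x).sub_const a).const_mul α).fun_neg
    have h2 := h1.exp
    have h3 := (h2.div_const α).fun_neg
    refine h3.congr_deriv ?_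
    field_simp
  have hint : IntervalIntegrable (fun s => Real.exp (-(α * (s - a)))) volume a a' :=
    (Real.continuous_exp.comp (by continuity)).intervalIntegrable a a'
  rw [intervalIntegral.integral_eq_sub_of_hasDerivAt key hint]
  simp only [sub_self, mul_zero, neg_zero, Real.exp_zero]
  ring

lemma lb_hasDerivAt (θ₀ : ℝ) (hθ : θ₀ ∈ Ioo (0:ℝ) 1) (t : ℝ) (ht : t ∈ Ioo (0:ℝ) 1) :
    HasDerivAt (fun t => θ₀ * Real.log (θ₀ / t) + (1 - θ₀) * Real.log ((1 - θ₀) / (1 - t)))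
      ((t - θ₀) / (t * (1 - t))) t := by
  obtain ⟨ht0, ht1⟩ := ht
  obtain ⟨hθ0, hθ1⟩ := hθ
  have h1t : (0:ℝ) < 1 - t := by linarith
  have hg : HasDerivAt
      (fun t => θ₀ * (Real.log θ₀ - Real.log t) + (1 - θ₀) * (Real.log (1 - θ₀) - Real.log (1 - t)))
      ((t - θ₀) / (t * (1 - t))) t := by
    have hlog : HasDerivAt (fun s : ℝ => Real.log s) (1 / t) t := by
      simpa using Real.hasDerivAt_log ht0.ne'
    have hlog1 : HasDerivAt (fun s : ℝ => Real.log (1 - s)) ((-1) / (1 - t)) t := by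
      have hlin : HasDerivAt (fun s : ℝ => 1 - s) (-1) t := by
        simpa using (hasDerivAt_id t).const_sub 1
      exact hlin.log h1t.ne'
    have h := (((hasDerivAt_const t (Real.log θ₀)).fun_sub hlog).const_mul θ₀).fun_add
      (((hasDerivAt_const t (Real.log (1 - θ₀))).fun_sub hlog1).const_mul (1 - θ₀))
    refine h.congr_deriv ?_
    field_simp
    ring
  refine hg.congr_of_eventuallyEq ?_
  have hmem : Ioo (0:ℝ) 1 ∈ nhds t := isOpen_Ioo.mem_nhds ⟨ht0, ht1⟩
  filter_upwards [hmem] with s hs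
  rw [Real.log_div hθ0.ne' hs.1.ne', Real.log_div (by linarith : (0:ℝ) < 1 - θ₀).ne'
    (by linarith [hs.2] : (0:ℝ) < 1 - s).ne']

set_option maxHeartbeats 1000000

lemma lb_key
    (p : ℝ → ℝ) (hp_nonneg : ∀ t ∈ Ioo (0:ℝ) 1, 0 ≤ p t)
    (hp_cont : ContinuousOn p (Ioo (0:ℝ) 1))
    (hp_int : IntegrableOn p (Ioo (0:ℝ) 1))
    (θ₀ : ℝ) (hθ₀ : θ₀ ∈ Ioo (0:ℝ) 1)
    (b : ℝ) (hb : b ∈ Ioo θ₀ 1) (hpb : 0 < p b)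
    (d : ℝ → ℝ)
    (hd : ∀ t, d t = θ₀ * Real.log (θ₀ / t) + (1 - θ₀) * Real.log ((1 - θ₀) / (1 - t))) :
    Tendsto (fun n : ℕ =>
        (n : ℝ) * ∫ s in Ioo b 1, p s * Real.exp (-((n : ℝ) * (d s - d b))))
      atTop (nhds (p b / ((b - θ₀) / (b * (1 - b))))) := by
  have hb0 : (0:ℝ) < b := lt_trans hθ₀.1 hb.1
  have hb1 : b < 1 := hb.2
  have hbb : b ∈ Ioo (0:ℝ) 1 := ⟨hb0, hb1⟩
  set c : ℝ := (b - θ₀) / (b * (1 - b)) with hc_def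
  have hc : 0 < c := div_pos (by linarith [hb.1]) (mul_pos hb0 (by linarith))
  set L : ℝ := p b / c with hL_def
  have hL : 0 < L := div_pos hpb hc
  -- derivative of d
  have hdD : ∀ t ∈ Ioo (0:ℝ) 1, HasDerivAt d ((t - θ₀) / (t * (1 - t))) t := by
    have : d = fun t => θ₀ * Real.log (θ₀ / t) + (1 - θ₀) * Real.log ((1 - θ₀) / (1 - t)) :=
      funext hd
    rw [this]
    exact fun t ht => lb_hasDerivAt θ₀ hθ₀ t ht
  have hd_cont : ContinuousOn d (Ioo (0:ℝ) 1) :=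
    fun t ht => (hdD t ht).continuousAt.continuousWithinAt
  -- d strictly monotone on Ico b 1
  have hmono : StrictMonoOn d (Ico b 1) := by
    apply strictMonoOn_of_deriv_pos (convex_Ico b 1)
    · exact hd_cont.mono (fun x hx => ⟨lt_of_lt_of_le hb0 hx.1, hx.2⟩)
    · intro x hx
      rw [interior_Ico] at hx
      rw [(hdD x ⟨lt_trans hb0 hx.1, hx.2⟩).deriv]
      apply div_pos (by linarith [hb.1, hx.1]) (mul_pos (by linarith [hx.1]) (by linarith [hx.2]))
  have hd_ge : ∀ s ∈ Ioo b 1, d b ≤ d s := fun s hs =>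
    (hmono ⟨le_refl b, hb1⟩ ⟨le_of_lt hs.1, hs.2⟩ hs.1).le
  -- integrand
  set g : ℕ → ℝ → ℝ := fun n s => p s * Real.exp (-((n : ℝ) * (d s - d b))) with hg_def
  have hsub01 : Ioo b 1 ⊆ Ioo (0:ℝ) 1 := fun x hx => ⟨lt_trans hb0 hx.1, hx.2⟩
  have hg_cont : ∀ n : ℕ, ContinuousOn (g n) (Ioo b 1) := by
    intro n
    apply ContinuousOn.mul (hp_cont.mono hsub01)
    exact Real.continuous_exp.comp_continuousOn
      ((continuousOn_const.mul ((hd_cont.mono hsub01).sub continuousOn_const)).neg)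
  have hg_int : ∀ n : ℕ, IntegrableOn (g n) (Ioo b 1) := by
    intro n
    apply Integrable.mono' (hp_int.mono_set hsub01)
      ((hg_cont n).aestronglyMeasurable measurableSet_Ioo)
    rw [ae_restrict_iff' measurableSet_Ioo]
    filter_upwards with s hs
    have h1 : 0 ≤ p s := hp_nonneg s (hsub01 hs)
    have h2 : Real.exp (-((n : ℝ) * (d s - d b))) ≤ 1 := by
      apply Real.exp_le_one_iff.2
      have := hd_ge s hs
      have : (0:ℝ) ≤ (n : ℝ) * (d s - d b) := mul_nonneg (Nat.cast_nonneg n) (by linarith)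
      linarith
    rw [Real.norm_eq_abs, abs_of_nonneg (mul_nonneg h1 (Real.exp_pos _).le)]
    calc p s * Real.exp (-((n : ℝ) * (d s - d b))) ≤ p s * 1 :=
        mul_le_mul_of_nonneg_left h2 h1
      _ = p s := mul_one _
  set M : ℝ := ∫ s in Ioo b 1, p s with hM_def
  -- the two-sided eventual bounds
  have hbounds : ∀ ε₁ : ℝ, ε₁ ∈ Ioo (0:ℝ) 1 → ∀ᶠ n : ℕ in atTop,
      (n : ℝ) * ∫ s in Ioo b 1, g n s ≤ L * (1 + ε₁) / (1 - ε₁) + ε₁ ∧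
      L * (1 - ε₁) / (1 + ε₁) - ε₁ ≤ (n : ℝ) * ∫ s in Ioo b 1, g n s := by
    intro ε₁ hε₁
    obtain ⟨hε₁0, hε₁1⟩ := hε₁
    -- continuity at b, choose δ
    have hφ : ContinuousAt (fun s : ℝ => (s - θ₀) / (s * (1 - s))) b := by
      apply ContinuousAt.div (by fun_prop) (by fun_prop)
      exact (mul_pos hb0 (by linarith)).ne'
    have hpc : ContinuousAt p b := hp_cont.continuousAt (isOpen_Ioo.mem_nhds hbb)
    have e1 : ∀ᶠ s in nhds b, p s < p b * (1 + ε₁) :=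
      hpc.eventually_lt_const (by nlinarith)
    have e2 : ∀ᶠ s in nhds b, p b * (1 - ε₁) < p s :=
      hpc.eventually_const_lt (by nlinarith)
    have hφ' : Tendsto (fun s : ℝ => (s - θ₀) / (s * (1 - s))) (nhds b) (nhds c) := hφ
    have e3 : ∀ᶠ s in nhds b, (s - θ₀) / (s * (1 - s)) < c * (1 + ε₁) :=
      hφ'.eventually_lt_const (by nlinarith)
    have e4 : ∀ᶠ s in nhds b, c * (1 - ε₁) < (s - θ₀) / (s * (1 - s)) :=
      hφ'.eventually_const_lt (by nlinarith)
    have e5 : ∀ᶠ s in nhds b, s < 1 := eventually_of_mem (Iio_mem_nhds hb1) (fun s hs => hs)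
    have hev : ∀ᶠ s in nhds b, p s < p b * (1 + ε₁) ∧ p b * (1 - ε₁) < p s ∧
        (s - θ₀) / (s * (1 - s)) < c * (1 + ε₁) ∧ c * (1 - ε₁) < (s - θ₀) / (s * (1 - s)) ∧
        s < 1 := by
      filter_upwards [e1, e2, e3, e4, e5] with s h1 h2 h3 h4 h5
      exact ⟨h1, h2, h3, h4, h5⟩
    rw [Metric.eventually_nhds_iff] at hev
    obtain ⟨r, hr, hP⟩ := hev
    set δ : ℝ := r / 2 with hδ_def
    have hδ : 0 < δ := by positivity
    set a' : ℝ := b + δ with ha'_def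
    have hba' : b < a' := by simp [ha'_def]; linarith
    have hIcc : ∀ s ∈ Icc b a', p s < p b * (1 + ε₁) ∧ p b * (1 - ε₁) < p s ∧
        (s - θ₀) / (s * (1 - s)) < c * (1 + ε₁) ∧ c * (1 - ε₁) < (s - θ₀) / (s * (1 - s)) ∧
        s < 1 := by
      intro s hs
      apply hP
      rw [Real.dist_eq, abs_of_nonneg (by linarith [hs.1])]
      have := hs.2
      simp only [ha'_def] at this
      linarith
    have ha'1 : a' < 1 := (hIcc a' ⟨hba'.le, le_refl a'⟩).2.2.2.2
    have hIccsub : Icc b a' ⊆ Ioo (0:ℝ) 1 := fun s hs =>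
      ⟨lt_of_lt_of_le hb0 hs.1, (hIcc s hs).2.2.2.2⟩
    -- derivative comparison on [b, a']
    have hub : ∀ s ∈ Icc b a', d s - d b ≤ c * (1 + ε₁) * (s - b) := by
      intro s hs
      have hm : MonotoneOn (fun s => c * (1 + ε₁) * (s - b) - d s) (Icc b a') := by
        apply monotoneOn_of_deriv_nonneg (convex_Icc b a')
        · exact ((continuous_const.mul (continuous_id.sub continuous_const)).continuousOn).sub
            (hd_cont.mono hIccsub)
        · intro x hx
          rw [interior_Icc] at hx
          have hx01 : x ∈ Ioo (0:ℝ) 1 := hIccsub ⟨hx.1.le, hx.2.le⟩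
          exact ((((hasDerivAt_id x).sub_const b).const_mul (c * (1 + ε₁))).sub
            (hdD x hx01)).differentiableAt.differentiableWithinAt
        · intro x hx
          rw [interior_Icc] at hx
          have hx01 : x ∈ Ioo (0:ℝ) 1 := hIccsub ⟨hx.1.le, hx.2.le⟩
          have hD : HasDerivAt (fun s => c * (1 + ε₁) * (s - b) - d s)
              (c * (1 + ε₁) * 1 - (x - θ₀) / (x * (1 - x))) x :=
            (((hasDerivAt_id x).sub_const b).const_mul (c * (1 + ε₁))).sub (hdD x hx01)
          rw [hD.deriv]
          have := (hIcc x ⟨hx.1.le, hx.2.le⟩).2.2.1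
          linarith
      have := hm (left_mem_Icc.2 hba'.le) hs hs.1
      simp only [sub_self, mul_zero, zero_sub] at this
      linarith
    have hlb : ∀ s ∈ Icc b a', c * (1 - ε₁) * (s - b) ≤ d s - d b := by
      intro s hs
      have hm : MonotoneOn (fun s => d s - c * (1 - ε₁) * (s - b)) (Icc b a') := by
        apply monotoneOn_of_deriv_nonneg (convex_Icc b a')
        · exact (hd_cont.mono hIccsub).sub
            ((continuous_const.mul (continuous_id.sub continuous_const)).continuousOn)
        · intro x hx
          rw [interior_Icc] at hx
          have hx01 : x ∈ Ioo (0:ℝ) 1 := hIccsub ⟨hx.1.le, hx.2.le⟩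
          exact ((hdD x hx01).sub
            (((hasDerivAt_id x).sub_const b).const_mul (c * (1 - ε₁)))).differentiableAt.differentiableWithinAt
        · intro x hx
          rw [interior_Icc] at hx
          have hx01 : x ∈ Ioo (0:ℝ) 1 := hIccsub ⟨hx.1.le, hx.2.le⟩
          have hD : HasDerivAt (fun s => d s - c * (1 - ε₁) * (s - b))
              ((x - θ₀) / (x * (1 - x)) - c * (1 - ε₁) * 1) x :=
            (hdD x hx01).sub (((hasDerivAt_id x).sub_const b).const_mul (c * (1 - ε₁)))
          rw [hD.deriv]
          have := (hIcc x ⟨hx.1.le, hx.2.le⟩).2.2.2.1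
          linarith
      have := hm (left_mem_Icc.2 hba'.le) hs hs.1
      simp only [sub_self, mul_zero, sub_zero] at this
      linarith
    -- split the integral
    have hIoosub : Ioo b a' ⊆ Ioo b 1 := Ioo_subset_Ioo (le_refl b) ha'1.le
    have hIoosub' : Ioo a' 1 ⊆ Ioo b 1 := Ioo_subset_Ioo hba'.le (le_refl 1)
    have hsplit : ∀ n : ℕ, (∫ s in Ioo b 1, g n s) =
        (∫ s in Ioo b a', g n s) + ∫ s in Ioo a' 1, g n s := by
      intro n
      have hdisj : Disjoint (Ioo b a') (Ico a' 1) :=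
        disjoint_left.2 fun x hx hx' => absurd hx.2 (not_lt.2 hx'.1)
      have hun : Ioo b a' ∪ Ico a' 1 = Ioo b 1 := Ioo_union_Ico_eq_Ioo hba' ha'1.le
      rw [← hun, setIntegral_union hdisj measurableSet_Ico
        ((hg_int n).mono_set (by rw [← hun]; exact subset_union_left))
        ((hg_int n).mono_set (by rw [← hun]; exact subset_union_right)),
        integral_Ico_eq_integral_Ioo]
    -- tail bound
    set Δ : ℝ := d a' - d b with hΔ_def
    have hΔ : 0 < Δ := by
      have := hmono ⟨le_refl b, hb1⟩ ⟨hba'.le, ha'1⟩ hba'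
      simp only [hΔ_def]; linarith
    have htail0 : ∀ n : ℕ, 0 ≤ ∫ s in Ioo a' 1, g n s := by
      intro n
      apply setIntegral_nonneg measurableSet_Ioo
      intro s hs
      exact mul_nonneg (hp_nonneg s (hsub01 (hIoosub' hs))) (Real.exp_pos _).le
    have hM0 : 0 ≤ M := setIntegral_nonneg measurableSet_Ioo fun s hs => hp_nonneg s (hsub01 hs)
    have htail : ∀ n : ℕ, (∫ s in Ioo a' 1, g n s) ≤ Real.exp (-((n:ℝ) * Δ)) * M := by
      intro n
      have h1 : ∀ s ∈ Ioo a' 1, g n s ≤ Real.exp (-((n:ℝ) * Δ)) * p s := by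
        intro s hs
        have hds : d a' ≤ d s :=
          (hmono ⟨hba'.le, ha'1⟩ ⟨(lt_trans hba' hs.1).le, hs.2⟩ hs.1).le
        have hexp : Real.exp (-((n:ℝ) * (d s - d b))) ≤ Real.exp (-((n:ℝ) * Δ)) := by
          apply Real.exp_le_exp.2
          have h := mul_le_mul_of_nonneg_left (show Δ ≤ d s - d b by
            simp only [hΔ_def]; linarith) (Nat.cast_nonneg n)
          linarith
        calc g n s = p s * Real.exp (-((n:ℝ) * (d s - d b))) := rfl
          _ ≤ p s * Real.exp (-((n:ℝ) * Δ)) :=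
            mul_le_mul_of_nonneg_left hexp (hp_nonneg s (hsub01 (hIoosub' hs)))
          _ = Real.exp (-((n:ℝ) * Δ)) * p s := mul_comm _ _
      calc (∫ s in Ioo a' 1, g n s)
          ≤ ∫ s in Ioo a' 1, Real.exp (-((n:ℝ) * Δ)) * p s :=
            setIntegral_mono_on ((hg_int n).mono_set hIoosub')
              ((hp_int.mono_set (fun x hx => hsub01 (hIoosub' hx))).const_mul _)
              measurableSet_Ioo h1
        _ = Real.exp (-((n:ℝ) * Δ)) * ∫ s in Ioo a' 1, p s := integral_const_mul _ _
        _ ≤ Real.exp (-((n:ℝ) * Δ)) * M := by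
            apply mul_le_mul_of_nonneg_left _ (Real.exp_pos _).le
            apply setIntegral_mono_set (hp_int.mono_set hsub01)
            · exact (ae_restrict_mem measurableSet_Ioo).mono fun s hs => hp_nonneg s (hsub01 hs)
            · exact HasSubset.Subset.eventuallyLE hIoosub'
    -- main term upper bound
    have hmain_up : ∀ n : ℕ, 1 ≤ n →
        (n : ℝ) * ∫ s in Ioo b a', g n s ≤ L * (1 + ε₁) / (1 - ε₁) := by
      intro n hn
      have hn0 : (0:ℝ) < n := by exact_mod_cast hn
      set α : ℝ := (n:ℝ) * (c * (1 - ε₁)) with hα_def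
      have hα0 : 0 < α := by
        apply mul_pos hn0 (mul_pos hc (by linarith))
      have hpt : ∀ s ∈ Ioo b a', g n s ≤ (p b * (1 + ε₁)) * Real.exp (-(α * (s - b))) := by
        intro s hs
        have hsIcc : s ∈ Icc b a' := ⟨hs.1.le, hs.2.le⟩
        have h1 : p s ≤ p b * (1 + ε₁) := (hIcc s hsIcc).1.le
        have h2 : Real.exp (-((n:ℝ) * (d s - d b))) ≤ Real.exp (-(α * (s - b))) := by
          apply Real.exp_le_exp.2
          have h := mul_le_mul_of_nonneg_left (hlb s hsIcc) (Nat.cast_nonneg n)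
          have : α * (s - b) = (n:ℝ) * (c * (1 - ε₁) * (s - b)) := by rw [hα_def]; ring
          rw [this]
          linarith
        exact mul_le_mul h1 h2 (Real.exp_pos _).le (by nlinarith)
      have hRHSint : IntegrableOn (fun s => (p b * (1 + ε₁)) * Real.exp (-(α * (s - b))))
          (Ioo b a') := by
        apply IntegrableOn.mono_set _ Ioo_subset_Icc_self
        exact Continuous.integrableOn_Icc (continuous_const.mul
          (Real.continuous_exp.comp
            ((continuous_const.mul (continuous_id.sub continuous_const)).neg)))
      have hle : (∫ s in Ioo b a', g n s)
          ≤ ∫ s in Ioo b a', (p b * (1 + ε₁)) * Real.exp (-(α * (s - b))) :=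
        setIntegral_mono_on ((hg_int n).mono_set hIoosub) hRHSint measurableSet_Ioo hpt
      have hval : (∫ s in Ioo b a', (p b * (1 + ε₁)) * Real.exp (-(α * (s - b))))
          = (p b * (1 + ε₁)) * ((1 - Real.exp (-(α * (a' - b)))) / α) := by
        rw [integral_const_mul, lb_exp_integral α b a' hα0 hba'.le]
      have hle2 : (∫ s in Ioo b a', g n s) ≤ (p b * (1 + ε₁)) * (1 / α) := by
        rw [hval] at hle
        have h1e : (1 - Real.exp (-(α * (a' - b)))) / α ≤ 1 / α := by
          gcongr
          linarith [(Real.exp_pos (-(α * (a' - b)))).le]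
        exact le_trans hle (mul_le_mul_of_nonneg_left h1e (by nlinarith))
      calc (n : ℝ) * ∫ s in Ioo b a', g n s ≤ (n:ℝ) * ((p b * (1 + ε₁)) * (1 / α)) :=
          mul_le_mul_of_nonneg_left hle2 (Nat.cast_nonneg n)
        _ = L * (1 + ε₁) / (1 - ε₁) := by
          have hne : (n:ℝ) ≠ 0 := hn0.ne'
          have hcne : c ≠ 0 := hc.ne'
          have h1ε : (1:ℝ) - ε₁ ≠ 0 := by linarith
          rw [hα_def, hL_def]
          field_simp
    -- main term lower bound
    have hmain_lo : ∀ n : ℕ, 1 ≤ n →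
        L * (1 - ε₁) / (1 + ε₁) * (1 - Real.exp (-((n:ℝ) * (c * (1 + ε₁) * δ))))
          ≤ (n : ℝ) * ∫ s in Ioo b a', g n s := by
      intro n hn
      have hn0 : (0:ℝ) < n := by exact_mod_cast hn
      set β : ℝ := (n:ℝ) * (c * (1 + ε₁)) with hβ_def
      have hβ0 : 0 < β := mul_pos hn0 (mul_pos hc (by linarith))
      have hpt : ∀ s ∈ Ioo b a', (p b * (1 - ε₁)) * Real.exp (-(β * (s - b))) ≤ g n s := by
        intro s hs
        have hsIcc : s ∈ Icc b a' := ⟨hs.1.le, hs.2.le⟩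
        have h1 : p b * (1 - ε₁) ≤ p s := (hIcc s hsIcc).2.1.le
        have h2 : Real.exp (-(β * (s - b))) ≤ Real.exp (-((n:ℝ) * (d s - d b))) := by
          apply Real.exp_le_exp.2
          have h := mul_le_mul_of_nonneg_left (hub s hsIcc) (Nat.cast_nonneg n)
          have : β * (s - b) = (n:ℝ) * (c * (1 + ε₁) * (s - b)) := by rw [hβ_def]; ring
          rw [this]
          linarith
        exact mul_le_mul h1 h2 (Real.exp_pos _).le (hp_nonneg s (hsub01 (hIoosub hs)))
      have hLHSint : IntegrableOn (fun s => (p b * (1 - ε₁)) * Real.exp (-(β * (s - b))))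
          (Ioo b a') := by
        apply IntegrableOn.mono_set _ Ioo_subset_Icc_self
        exact Continuous.integrableOn_Icc (continuous_const.mul
          (Real.continuous_exp.comp
            ((continuous_const.mul (continuous_id.sub continuous_const)).neg)))
      have hle : (∫ s in Ioo b a', (p b * (1 - ε₁)) * Real.exp (-(β * (s - b))))
          ≤ ∫ s in Ioo b a', g n s :=
        setIntegral_mono_on hLHSint ((hg_int n).mono_set hIoosub) measurableSet_Ioo hpt
      have hval : (∫ s in Ioo b a', (p b * (1 - ε₁)) * Real.exp (-(β * (s - b))))
          = (p b * (1 - ε₁)) * ((1 - Real.exp (-(β * δ))) / β) := by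
        rw [integral_const_mul, lb_exp_integral β b a' hβ0 hba'.le]
        have : a' - b = δ := by simp [ha'_def]
        rw [this]
      have he : (n:ℝ) * ((p b * (1 - ε₁)) * ((1 - Real.exp (-(β * δ))) / β))
          = L * (1 - ε₁) / (1 + ε₁) * (1 - Real.exp (-((n:ℝ) * (c * (1 + ε₁) * δ)))) := by
        have hβδ : β * δ = (n:ℝ) * (c * (1 + ε₁) * δ) := by rw [hβ_def]; ring
        have hne : (n:ℝ) ≠ 0 := hn0.ne'
        have hcne : c ≠ 0 := hc.ne'
        have h1ε : (1:ℝ) + ε₁ ≠ 0 := by linarith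
        rw [hβ_def, hL_def, hβδ]
        field_simp
      calc L * (1 - ε₁) / (1 + ε₁) * (1 - Real.exp (-((n:ℝ) * (c * (1 + ε₁) * δ))))
          = (n:ℝ) * ((p b * (1 - ε₁)) * ((1 - Real.exp (-(β * δ))) / β)) := he.symm
        _ = (n:ℝ) * ∫ s in Ioo b a', (p b * (1 - ε₁)) * Real.exp (-(β * (s - b))) := by
            rw [hval]
        _ ≤ (n:ℝ) * ∫ s in Ioo b a', g n s :=
            mul_le_mul_of_nonneg_left hle (Nat.cast_nonneg n)
    -- decay of n * exp(-nK) * C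
    have hdecay : ∀ K C : ℝ, 0 < K →
        Tendsto (fun n : ℕ => (n:ℝ) * (Real.exp (-((n:ℝ) * K)) * C)) atTop (nhds 0) := by
      intro K C hK
      have hx : Tendsto (fun x : ℝ => x * Real.exp (-x)) atTop (nhds 0) := by
        simpa using Real.tendsto_pow_mul_exp_neg_atTop_nhds_zero 1
      have hcomp : Tendsto (fun n : ℕ => K * (n:ℝ)) atTop atTop :=
        (tendsto_natCast_atTop_atTop).const_mul_atTop hK
      have h2 := (hx.comp hcomp).const_mul (C / K)
      rw [mul_zero] at h2
      apply h2.congr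
      intro n
      simp only [Function.comp_apply]
      rw [show -(K * (n:ℝ)) = -((n:ℝ) * K) by ring]
      field_simp
    have hevt1 := (hdecay Δ M hΔ).eventually_lt_const hε₁0
    have hevt2 := (hdecay (c * (1 + ε₁) * δ) (L * (1 - ε₁) / (1 + ε₁))
      (mul_pos (mul_pos hc (by linarith)) hδ)).eventually_lt_const hε₁0
    filter_upwards [eventually_ge_atTop 1, hevt1, hevt2] with n hn h1 h2
    have hn0 : (1:ℝ) ≤ (n:ℝ) := by exact_mod_cast hn
    have hC0 : 0 ≤ L * (1 - ε₁) / (1 + ε₁) :=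
      div_nonneg (mul_nonneg hL.le (by linarith)) (by linarith)
    constructor
    · rw [hsplit n, mul_add]
      have t1 := hmain_up n hn
      have t2 : (n:ℝ) * ∫ s in Ioo a' 1, g n s ≤ ε₁ := by
        calc (n:ℝ) * ∫ s in Ioo a' 1, g n s
            ≤ (n:ℝ) * (Real.exp (-((n:ℝ) * Δ)) * M) :=
              mul_le_mul_of_nonneg_left (htail n) (Nat.cast_nonneg n)
          _ ≤ ε₁ := h1.le
      linarith
    · rw [hsplit n, mul_add]
      have t1 := hmain_lo n hn
      have t2 : 0 ≤ (n:ℝ) * ∫ s in Ioo a' 1, g n s :=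
        mul_nonneg (Nat.cast_nonneg n) (htail0 n)
      have t3 : L * (1 - ε₁) / (1 + ε₁) * Real.exp (-((n:ℝ) * (c * (1 + ε₁) * δ))) ≤ ε₁ := by
        have hE0 : 0 ≤ Real.exp (-((n:ℝ) * (c * (1 + ε₁) * δ))) * (L * (1 - ε₁) / (1 + ε₁)) :=
          mul_nonneg (Real.exp_pos _).le hC0
        calc L * (1 - ε₁) / (1 + ε₁) * Real.exp (-((n:ℝ) * (c * (1 + ε₁) * δ)))
            = Real.exp (-((n:ℝ) * (c * (1 + ε₁) * δ))) * (L * (1 - ε₁) / (1 + ε₁)) :=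
              mul_comm _ _
          _ ≤ (n:ℝ) * (Real.exp (-((n:ℝ) * (c * (1 + ε₁) * δ))) * (L * (1 - ε₁) / (1 + ε₁))) :=
              le_mul_of_one_le_left hE0 hn0
          _ ≤ ε₁ := h2.le
      nlinarith [t1, t2, t3]
  -- conclude
  rw [Metric.tendsto_atTop]
  intro ε hε
  set ε₁ : ℝ := min (1/2) (ε / (2 * (4 * L + 1))) with hε₁_def
  have hε₁pos : 0 < ε₁ := lt_min (by norm_num) (div_pos hε (by positivity))
  have hε₁half : ε₁ ≤ 1/2 := min_le_left _ _
  have hε₁lt1 : ε₁ < 1 := lt_of_le_of_lt hε₁half (by norm_num)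
  have hkey : (4 * L + 1) * ε₁ ≤ ε / 2 := by
    have h2 : ε₁ ≤ ε / (2 * (4 * L + 1)) := min_le_right _ _
    have h3 : (0:ℝ) < 4 * L + 1 := by positivity
    calc (4 * L + 1) * ε₁ ≤ (4 * L + 1) * (ε / (2 * (4 * L + 1))) :=
        mul_le_mul_of_nonneg_left h2 h3.le
      _ = ε / 2 := by field_simp
  obtain ⟨N, hN⟩ := (hbounds ε₁ ⟨hε₁pos, hε₁lt1⟩).exists_forall_of_atTop
  refine ⟨N, fun n hn => ?_⟩
  obtain ⟨hup, hlow⟩ := hN n hn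
  rw [Real.dist_eq, abs_sub_lt_iff]
  constructor
  · -- J n - L < ε
    have h0 : (1:ℝ) - ε₁ ≠ 0 := by linarith
    have h1 : L * (1 + ε₁) / (1 - ε₁) - L = L * (2 * ε₁) / (1 - ε₁) := by
      field_simp
      ring
    have h2 : L * (2 * ε₁) / (1 - ε₁) ≤ 4 * L * ε₁ := by
      rw [div_le_iff₀ (by linarith)]
      nlinarith [mul_nonneg (mul_nonneg hL.le hε₁pos.le) (by linarith : (0:ℝ) ≤ 1 - 2 * ε₁)]
    nlinarith
  · -- L - J n < ε
    have h0 : (1:ℝ) + ε₁ ≠ 0 := by linarith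
    have h1 : L - L * (1 - ε₁) / (1 + ε₁) = L * (2 * ε₁) / (1 + ε₁) := by
      field_simp
      ring
    have h2 : L * (2 * ε₁) / (1 + ε₁) ≤ 2 * L * ε₁ := by
      rw [div_le_iff₀ (by linarith)]
      nlinarith [mul_nonneg (mul_nonneg hL.le hε₁pos.le) hε₁pos.le]
    nlinarith


theorem laplace_boundary
    (p : ℝ → ℝ) (hp_nonneg : ∀ t ∈ Ioo (0:ℝ) 1, 0 ≤ p t)
    (hp_cont : ContinuousOn p (Ioo (0:ℝ) 1))
    (hp_int : IntegrableOn p (Ioo (0:ℝ) 1))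
    (θ₀ : ℝ) (hθ₀ : θ₀ ∈ Ioo (0:ℝ) 1)
    (b : ℝ) (hb : b ∈ Ioo θ₀ 1) (hpb : 0 < p b)
    (d : ℝ → ℝ)
    (hd : ∀ t, d t = θ₀ * Real.log (θ₀ / t) + (1 - θ₀) * Real.log ((1 - θ₀) / (1 - t))) :
    Tendsto (fun n : ℕ =>
      (∫ s in Ioo b 1, p s * Real.exp (-(n : ℝ) * d s)) /
        ((1 / (n : ℝ)) * (p b / ((b - θ₀) / (b * (1 - b)))) * Real.exp (-(n : ℝ) * d b)))
      atTop (nhds 1) := by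
  have hb0 : (0:ℝ) < b := lt_trans hθ₀.1 hb.1
  set c : ℝ := (b - θ₀) / (b * (1 - b)) with hc_def
  have hc : 0 < c := div_pos (by linarith [hb.1]) (mul_pos hb0 (by linarith [hb.2]))
  set L : ℝ := p b / c with hL_def
  have hL : 0 < L := div_pos hpb hc
  have hkey := lb_key p hp_nonneg hp_cont hp_int θ₀ hθ₀ b hb hpb d hd
  have hlim : Tendsto (fun n : ℕ =>
      ((n : ℝ) * ∫ s in Ioo b 1, p s * Real.exp (-((n : ℝ) * (d s - d b)))) / L)
      atTop (nhds 1) := by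
    have := hkey.div_const L
    rwa [div_self hL.ne'] at this
  apply hlim.congr'
  filter_upwards [eventually_ge_atTop 1] with n hn
  have hn0 : (0:ℝ) < (n:ℝ) := by exact_mod_cast hn
  have hident : ∀ s, p s * Real.exp (-(n:ℝ) * d s)
      = Real.exp (-(n:ℝ) * d b) * (p s * Real.exp (-((n:ℝ) * (d s - d b)))) := by
    intro s
    rw [show Real.exp (-(n:ℝ) * d b) * (p s * Real.exp (-((n:ℝ) * (d s - d b))))
        = p s * (Real.exp (-(n:ℝ) * d b) * Real.exp (-((n:ℝ) * (d s - d b)))) by ring,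
      ← Real.exp_add]
    congr 2
    ring
  have hint_eq : (∫ s in Ioo b 1, p s * Real.exp (-(n : ℝ) * d s))
      = Real.exp (-(n:ℝ) * d b) * ∫ s in Ioo b 1, p s * Real.exp (-((n:ℝ) * (d s - d b))) := by
    rw [← integral_const_mul]
    exact integral_congr_ae (Filter.Eventually.of_forall fun s => hident s)
  rw [hint_eq]
  have hexp_ne : Real.exp (-(n:ℝ) * d b) ≠ 0 := (Real.exp_pos _).ne'
  field_simp
end
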